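/- arXiv:1312.4774 — 3 statements merged into one kernel-verified Lean document; each statement's English description precedes it below -/
import Mathlib

section
/- (The exceptional case ξ = ξ*) Let a ∈ ℝ_{>0}^{3+3n}. There exists at most one g ∈ ℝ_{>0}^3 with g_2 = ξ* and Θ(g,a) = 0; moreover, such a g can exist only if ω1·Ω6(ξ*) = ω3·Ω4(ξ*), and in that case g has the form g_1 = (ξ*)^{1−n}η, g_3 = (ξ*)^{−1}(Ω4(ξ*)/ω1 + (a_1 ξ*/ω1)η), where η is the unique positive root of the quadratic equation A(ξ*) + B(ξ*)η − C(ξ*)η² = 0. -/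
open Finset

namespace Phos

noncomputable section

/-- Standard basis vector of `ℝ^N`, with `1`-based index `j`. -/
def e (N : ℕ) (j : ℕ) : Fin N → ℝ := fun m => if (m : ℕ) + 1 = j then 1 else 0

/-- Standard basis vector of `ℕ^N`, with `1`-based index `j`. -/
def eN (N : ℕ) (j : ℕ) : Fin N → ℕ := fun m => if (m : ℕ) + 1 = j then 1 else 0

/-- The stoichiometric matrix `S` of the `n`-site sequential distributive
phosphorylation network.  For each `i = 1,…,n` the six columns `6(i−1)+1,…,6(i−1)+6`
are `e_{1+3i}−e_1−e_{3i−1}`, `e_1+e_{3i−1}−e_{1+3i}`, `e_1+e_{2+3i}−e_{1+3i}`,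
`e_{3+3i}−e_3−e_{2+3i}`, `e_3+e_{2+3i}−e_{3+3i}`, `e_3+e_{3i−1}−e_{3+3i}`. -/
def Smat (n : ℕ) : Matrix (Fin (3*n+3)) (Fin (6*n)) ℝ :=
  Matrix.of fun m r =>
    (![e (3*n+3) (1+3*((r : ℕ)/6+1)) - e (3*n+3) 1 - e (3*n+3) (3*((r : ℕ)/6+1)-1),
       e (3*n+3) 1 + e (3*n+3) (3*((r : ℕ)/6+1)-1) - e (3*n+3) (1+3*((r : ℕ)/6+1)),
       e (3*n+3) 1 + e (3*n+3) (2+3*((r : ℕ)/6+1)) - e (3*n+3) (1+3*((r : ℕ)/6+1)),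
       e (3*n+3) (3+3*((r : ℕ)/6+1)) - e (3*n+3) 3 - e (3*n+3) (2+3*((r : ℕ)/6+1)),
       e (3*n+3) 3 + e (3*n+3) (2+3*((r : ℕ)/6+1)) - e (3*n+3) (3+3*((r : ℕ)/6+1)),
       e (3*n+3) 3 + e (3*n+3) (3*((r : ℕ)/6+1)-1) - e (3*n+3) (3+3*((r : ℕ)/6+1))])
      ⟨(r : ℕ) % 6, Nat.mod_lt _ (by norm_num)⟩ m

/-- The rate exponent matrix `Y`: for each `i = 1,…,n` the six columns
`6(i−1)+1,…,6(i−1)+6` are `e_1+e_{3i−1}`, `e_{1+3i}`, `e_{1+3i}`,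
`e_3+e_{2+3i}`, `e_{3+3i}`, `e_{3+3i}`. -/
def Ymat (n : ℕ) : Matrix (Fin (3*n+3)) (Fin (6*n)) ℕ :=
  Matrix.of fun m r =>
    (![eN (3*n+3) 1 + eN (3*n+3) (3*((r : ℕ)/6+1)-1),
       eN (3*n+3) (1+3*((r : ℕ)/6+1)),
       eN (3*n+3) (1+3*((r : ℕ)/6+1)),
       eN (3*n+3) 3 + eN (3*n+3) (2+3*((r : ℕ)/6+1)),
       eN (3*n+3) (3+3*((r : ℕ)/6+1)),
       eN (3*n+3) (3+3*((r : ℕ)/6+1))])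
      ⟨(r : ℕ) % 6, Nat.mod_lt _ (by norm_num)⟩ m

/-- The monomial map `Φ(x)_j = ∏ₘ xₘ^{Y_{mj}}`. -/
def Phi (n : ℕ) (x : Fin (3*n+3) → ℝ) : Fin (6*n) → ℝ :=
  fun r => ∏ m, x m ^ (Ymat n m r)

/-- The conservation matrix `Z` (rows `z1, z2, z3`). -/
def Zmat (n : ℕ) : Matrix (Fin 3) (Fin (3*n+3)) ℝ :=
  Matrix.of fun r j =>
    if (r : ℕ) = 0 then (if (j : ℕ) % 3 = 0 then 1 else 0)
    else if (r : ℕ) = 1 then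
      (if (j : ℕ) % 3 = 1 then 1 else if (j : ℕ) = 0 ∨ (j : ℕ) = 2 then -1 else 0)
    else (if (j : ℕ) % 3 = 2 then 1 else 0)

/-- The `6 × 3` block `E0`. -/
def E0 : Fin 6 → Fin 3 → ℝ :=
  ![![1,0,1], ![1,0,0], ![0,0,1], ![0,1,1], ![0,1,0], ![0,0,1]]

/-- The block diagonal matrix `E` with `n` copies of `E0`. -/
def Emat (n : ℕ) : Matrix (Fin (6*n)) (Fin (3*n)) ℝ :=
  Matrix.of fun r c =>
    if (r : ℕ) / 6 = (c : ℕ) / 3 then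
      E0 ⟨(r : ℕ) % 6, Nat.mod_lt _ (by norm_num)⟩ ⟨(c : ℕ) % 3, Nat.mod_lt _ (by norm_num)⟩
    else 0

/-- The matrix `L ∈ ℤ^{(3+3n)×3}`: row `1 = (1, n−1, −1)`, row `2 = (−1, −n, 0)`,
row `3 = (1, n−2, −1)`, and for `i = 1,…,n` rows `1+3i` and `3+3i` equal
`(0, i−2, −1)` while row `2+3i = (−1, i−n, 0)`. -/
def Lmat (n : ℕ) : Matrix (Fin (3*n+3)) (Fin 3) ℤ :=
  Matrix.of fun j c =>
    if (j : ℕ) = 0 then ![1, (n : ℤ) - 1, -1] c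
    else if (j : ℕ) = 1 then ![-1, -(n : ℤ), 0] c
    else if (j : ℕ) = 2 then ![1, (n : ℤ) - 2, -1] c
    else if (j : ℕ) % 3 = 1 then ![-1, (((j : ℕ) / 3 : ℕ) : ℤ) - (n : ℤ), 0] c
    else ![0, (((j : ℕ) / 3 : ℕ) : ℤ) - 2, -1] c

/-- `g^L ∈ ℝ_{>0}^{3+3n}`, `(g^L)_j = g₁^{L_{j1}} g₂^{L_{j2}} g₃^{L_{j3}}`. -/
def gL (n : ℕ) (g : Fin 3 → ℝ) : Fin (3*n+3) → ℝ :=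
  fun j => ∏ c, g c ^ (Lmat n j c)

/-- The coset condition map `Θ(g,a) = Z diag(a) (g^L − 𝟙)`. -/
def Theta (n : ℕ) (g : Fin 3 → ℝ) (a : Fin (3*n+3) → ℝ) : Fin 3 → ℝ :=
  (Zmat n).mulVec (fun j => a j * (gL n g j - 1))

/-- The rate constants `κ(a,λ)_j = (Eλ)_j / Φ(a)_j`. -/
def kappaOf (n : ℕ) (a : Fin (3*n+3) → ℝ) (lam : Fin (3*n) → ℝ) : Fin (6*n) → ℝ :=
  fun r => (Emat n).mulVec lam r / Phi n a r

/-- `x` is a (positive) steady state of `ẋ = S diag(κ) Φ(x)`. -/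
def isSteady (n : ℕ) (κ : Fin (6*n) → ℝ) (x : Fin (3*n+3) → ℝ) : Prop :=
  (Smat n).mulVec (fun r => κ r * Phi n x r) = 0

/-- The `1`-based component `a_j` of a vector `a ∈ ℝ^{3+3n}`. -/
def av (n : ℕ) (a : Fin (3*n+3) → ℝ) (j : ℕ) : ℝ :=
  if h : j - 1 < 3*n+3 then a ⟨j - 1, h⟩ else 0

/-- `ω1 = Σ_{k=0}^n a_{1+3k}`. -/
def om1 (n : ℕ) (a : Fin (3*n+3) → ℝ) : ℝ := ∑ k ∈ Finset.range (n+1), av n a (1+3*k)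

/-- `ω2 = −a₁ − a₃ + Σ_{k=0}^n a_{2+3k}`. -/
def om2 (n : ℕ) (a : Fin (3*n+3) → ℝ) : ℝ :=
  -(av n a 1) - av n a 3 + ∑ k ∈ Finset.range (n+1), av n a (2+3*k)

/-- `ω3 = Σ_{k=0}^n a_{3+3k}`. -/
def om3 (n : ℕ) (a : Fin (3*n+3) → ℝ) : ℝ := ∑ k ∈ Finset.range (n+1), av n a (3+3*k)

/-- `Ω2(ξ) = Σ_{k=0}^n a_{2+3k} ξ^k`. -/
def Om2 (n : ℕ) (a : Fin (3*n+3) → ℝ) (ξ : ℝ) : ℝ :=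
  ∑ k ∈ Finset.range (n+1), av n a (2+3*k) * ξ ^ k

/-- `Ω4(ξ) = Σ_{k=1}^n a_{1+3k} ξ^{k−1}`. -/
def Om4 (n : ℕ) (a : Fin (3*n+3) → ℝ) (ξ : ℝ) : ℝ :=
  ∑ k ∈ Finset.Icc 1 n, av n a (1+3*k) * ξ ^ (k-1)

/-- `Ω6(ξ) = Σ_{k=1}^n a_{3+3k} ξ^{k−1}`. -/
def Om6 (n : ℕ) (a : Fin (3*n+3) → ℝ) (ξ : ℝ) : ℝ :=
  ∑ k ∈ Finset.Icc 1 n, av n a (3+3*k) * ξ ^ (k-1)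

/-- `Δ(ξ) = (a₁/ω1)ξ − a₃/ω3`. -/
def Dlt (n : ℕ) (a : Fin (3*n+3) → ℝ) (ξ : ℝ) : ℝ :=
  av n a 1 / om1 n a * ξ - av n a 3 / om3 n a

/-- `ξ* = (ω1 a₃)/(a₁ ω3)`. -/
def xistar (n : ℕ) (a : Fin (3*n+3) → ℝ) : ℝ :=
  om1 n a * av n a 3 / (av n a 1 * om3 n a)

/-- `F1(ξ) = Ω6(ξ)/ω3 − Ω4(ξ)/ω1`. -/
def F1 (n : ℕ) (a : Fin (3*n+3) → ℝ) (ξ : ℝ) : ℝ :=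
  Om6 n a ξ / om3 n a - Om4 n a ξ / om1 n a

/-- `F3(ξ) = (a₁ξ/ω1)(Ω6(ξ)/ω3) − (a₃/ω3)(Ω4(ξ)/ω1)`. -/
def F3 (n : ℕ) (a : Fin (3*n+3) → ℝ) (ξ : ℝ) : ℝ :=
  av n a 1 * ξ / om1 n a * (Om6 n a ξ / om3 n a) - av n a 3 / om3 n a * (Om4 n a ξ / om1 n a)

/-- `A(ξ) = (Ω4(ξ)+Ω6(ξ))Ω2(ξ)`. -/
def Ap (n : ℕ) (a : Fin (3*n+3) → ℝ) (ξ : ℝ) : ℝ := (Om4 n a ξ + Om6 n a ξ) * Om2 n a ξ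

/-- `B(ξ) = (a₁ξ + a₃)Ω2(ξ) − ω2 ξ (Ω4(ξ)+Ω6(ξ))`. -/
def Bp (n : ℕ) (a : Fin (3*n+3) → ℝ) (ξ : ℝ) : ℝ :=
  (av n a 1 * ξ + av n a 3) * Om2 n a ξ - om2 n a * ξ * (Om4 n a ξ + Om6 n a ξ)

/-- `C(ξ) = ξ(a₁ξ + a₃)(ω1+ω2+ω3)`. -/
def Cp (n : ℕ) (a : Fin (3*n+3) → ℝ) (ξ : ℝ) : ℝ :=
  ξ * (av n a 1 * ξ + av n a 3) * (om1 n a + om2 n a + om3 n a)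

/-- `P(ξ) = A(ξ)Δ(ξ)² + B(ξ)Δ(ξ)F1(ξ) − C(ξ)F1(ξ)²`. -/
def Pp (n : ℕ) (a : Fin (3*n+3) → ℝ) (ξ : ℝ) : ℝ :=
  Ap n a ξ * (Dlt n a ξ)^2 + Bp n a ξ * Dlt n a ξ * F1 n a ξ - Cp n a ξ * (F1 n a ξ)^2

/-- `θ(ξ) = 2C(ξ)F1(ξ) − Δ(ξ)[B(ξ) + (B(ξ)² + 4A(ξ)C(ξ))^{1/2}]`. -/
def thetaFun (n : ℕ) (a : Fin (3*n+3) → ℝ) (ξ : ℝ) : ℝ :=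
  2 * Cp n a ξ * F1 n a ξ -
    Dlt n a ξ * (Bp n a ξ + Real.sqrt ((Bp n a ξ)^2 + 4 * Ap n a ξ * Cp n a ξ))

/-- `g1(ξ) = ξ^{1−n} F1(ξ)/Δ(ξ)`. -/
def g1f (n : ℕ) (a : Fin (3*n+3) → ℝ) (ξ : ℝ) : ℝ :=
  ξ ^ ((1 : ℤ) - (n : ℤ)) * F1 n a ξ / Dlt n a ξ

/-- `g3(ξ) = ξ^{−1} F3(ξ)/Δ(ξ)`. -/
def g3f (n : ℕ) (a : Fin (3*n+3) → ℝ) (ξ : ℝ) : ℝ :=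
  ξ⁻¹ * F3 n a ξ / Dlt n a ξ

/-- The candidate second steady state `b = diag(g^L) a` built from a zero `ξ`
of the determining equation, with `g = (g1(ξ), ξ, g3(ξ))`. -/
def bOf (n : ℕ) (a : Fin (3*n+3) → ℝ) (ξ : ℝ) : Fin (3*n+3) → ℝ :=
  fun j => gL n ![g1f n a ξ, ξ, g3f n a ξ] j * a j

end

end Phos
namespace Phos
noncomputable section Aux

/-- ℕ-indexed copy of the `Zmat` entries. -/
def Zf (r : Fin 3) (j : ℕ) : ℝ :=
  if (r : ℕ) = 0 then (if j % 3 = 0 then 1 else 0)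
  else if (r : ℕ) = 1 then
    (if j % 3 = 1 then 1 else if j = 0 ∨ j = 2 then -1 else 0)
  else (if j % 3 = 2 then 1 else 0)

/-- ℕ-indexed copy of the `Lmat` rows. -/
def Lf (n : ℕ) (j : ℕ) (c : Fin 3) : ℤ :=
  if j = 0 then ![1, (n : ℤ) - 1, -1] c
  else if j = 1 then ![-1, -(n : ℤ), 0] c
  else if j = 2 then ![1, (n : ℤ) - 2, -1] c
  else if j % 3 = 1 then ![-1, ((j / 3 : ℕ) : ℤ) - (n : ℤ), 0] c
  else ![0, ((j / 3 : ℕ) : ℤ) - 2, -1] c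

lemma sum_range_triple (m : ℕ) (F : ℕ → ℝ) :
    ∑ j ∈ Finset.range (3*m), F j
      = ∑ k ∈ Finset.range m, (F (3*k) + F (3*k+1) + F (3*k+2)) := by
  induction m with
  | zero => simp
  | succ m ih =>
      have h3 : 3*(m+1) = 3*m+1+1+1 := by ring
      rw [h3, Finset.sum_range_succ, Finset.sum_range_succ, Finset.sum_range_succ, ih,
        Finset.sum_range_succ]
      ring

lemma theta_apply (n : ℕ) (g : Fin 3 → ℝ) (a : Fin (3*n+3) → ℝ) (r : Fin 3) :
    Theta n g a r = ∑ j ∈ Finset.range (3*n+3), Zf r j *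
      (av n a (j+1) * (g 0 ^ Lf n j 0 * g 1 ^ Lf n j 1 * g 2 ^ Lf n j 2 - 1)) := by
  rw [Theta, Matrix.mulVec, ← Fin.sum_univ_eq_sum_range]
  refine Finset.sum_congr rfl fun j _ => ?_
  have hav : av n a ((j:ℕ)+1) = a j := by
    simp [av]
  have hZ : Zmat n r j = Zf r (j:ℕ) := rfl
  have hL : gL n g j = g 0 ^ Lf n (j:ℕ) 0 * g 1 ^ Lf n (j:ℕ) 1 * g 2 ^ Lf n (j:ℕ) 2 := by
    rw [gL, Fin.prod_univ_three]
    rfl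
  simp [dotProduct, hav, hZ, hL]

end Aux
section Aux2

variable {n : ℕ} {a : Fin (3*n+3) → ℝ}

lemma Om4_eq (x : ℝ) : Om4 n a x = ∑ k ∈ Finset.range n, av n a (3*k+4) * x ^ k := by
  rw [Om4, ← Finset.Ico_add_one_right_eq_Icc, Finset.sum_Ico_eq_sum_range]
  refine Finset.sum_congr (by norm_num) fun k _ => ?_
  have h1 : 1 + 3*(1+k) = 3*k+4 := by ring
  have h2 : 1 + k - 1 = k := by omega
  rw [h1, h2]

lemma Om6_eq (x : ℝ) : Om6 n a x = ∑ k ∈ Finset.range n, av n a (3*k+6) * x ^ k := by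
  rw [Om6, ← Finset.Ico_add_one_right_eq_Icc, Finset.sum_Ico_eq_sum_range]
  refine Finset.sum_congr (by norm_num) fun k _ => ?_
  have h1 : 3 + 3*(1+k) = 3*k+6 := by ring
  have h2 : 1 + k - 1 = k := by omega
  rw [h1, h2]

lemma Om2_eq (x : ℝ) :
    Om2 n a x = (∑ k ∈ Finset.range n, av n a (3*k+5) * x ^ (k+1)) + av n a 2 := by
  rw [Om2, Finset.sum_range_succ']
  simp only [pow_zero, mul_one]
  refine congrArg₂ _ (Finset.sum_congr rfl fun k _ => ?_) rfl
  have h1 : 2 + 3*(k+1) = 3*k+5 := by ring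
  rw [h1]

lemma om1_eq : om1 n a = (∑ k ∈ Finset.range n, av n a (3*k+4)) + av n a 1 := by
  rw [om1, Finset.sum_range_succ']
  simp only [mul_zero, add_zero]
  refine congrArg₂ _ (Finset.sum_congr rfl fun k _ => ?_) rfl
  have h1 : 1 + 3*(k+1) = 3*k+4 := by ring
  rw [h1]

lemma om3_eq : om3 n a = (∑ k ∈ Finset.range n, av n a (3*k+6)) + av n a 3 := by
  rw [om3, Finset.sum_range_succ']
  simp only [mul_zero, add_zero]
  refine congrArg₂ _ (Finset.sum_congr rfl fun k _ => ?_) rfl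
  have h1 : 3 + 3*(k+1) = 3*k+6 := by ring
  rw [h1]

lemma om2_eq : om2 n a = -(av n a 1) - av n a 3 +
    ((∑ k ∈ Finset.range n, av n a (3*k+5)) + av n a 2) := by
  rw [om2, Finset.sum_range_succ']
  simp only [mul_zero, add_zero]
  refine congrArg₂ _ rfl (congrArg₂ _ (Finset.sum_congr rfl fun k _ => ?_) rfl)
  have h1 : 2 + 3*(k+1) = 3*k+5 := by ring
  rw [h1]

end Aux2
section Aux3

variable {n : ℕ} {g : Fin 3 → ℝ} {a : Fin (3*n+3) → ℝ}

lemma theta0_eq (hx : g 1 ≠ 0) :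
    Theta n g a 0 = (av n a 1 * (g 0 * (g 1) ^ ((n:ℤ)-1)) + (g 1)⁻¹ * Om4 n a (g 1))
        * (g 2)⁻¹ - om1 n a := by
  rw [theta_apply, show 3*n+3 = 3*(n+1) from by ring, sum_range_triple,
    Finset.sum_range_succ']
  have key : ∀ k ∈ Finset.range n,
      (Zf 0 (3*(k+1)) * (av n a (3*(k+1)+1) *
          (g 0 ^ Lf n (3*(k+1)) 0 * g 1 ^ Lf n (3*(k+1)) 1 * g 2 ^ Lf n (3*(k+1)) 2 - 1))
        + Zf 0 (3*(k+1)+1) * (av n a (3*(k+1)+1+1) *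
          (g 0 ^ Lf n (3*(k+1)+1) 0 * g 1 ^ Lf n (3*(k+1)+1) 1 * g 2 ^ Lf n (3*(k+1)+1) 2 - 1))
        + Zf 0 (3*(k+1)+2) * (av n a (3*(k+1)+2+1) *
          (g 0 ^ Lf n (3*(k+1)+2) 0 * g 1 ^ Lf n (3*(k+1)+2) 1 * g 2 ^ Lf n (3*(k+1)+2) 2 - 1)))
      = av n a (3*k+4) * ((g 1)^k * (g 1)⁻¹ * (g 2)⁻¹) - av n a (3*k+4) := by
    intro k hk
    simp only [show 3*(k+1) = 3*k+3 from by ring, show 3*k+3+1 = 3*k+4 from by omega,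
      show 3*k+4+1 = 3*k+5 from by omega, show 3*k+3+2 = 3*k+5 from by omega,
      show 3*k+5+1 = 3*k+6 from by omega]
    simp only [Zf, Lf,
      show (3*k+3) % 3 = 0 from by omega, show (3*k+4) % 3 = 1 from by omega,
      show (3*k+5) % 3 = 2 from by omega,
      show (3*k+3) ≠ 0 from by omega, show (3*k+3) ≠ 1 from by omega,
      show (3*k+3) ≠ 2 from by omega, show (3*k+3)/3 = k+1 from by omega,
      if_true, if_false, eq_self_iff_true]
    norm_num [Matrix.cons_val_two, Matrix.tail_cons, Matrix.head_cons]
    have hz : (g 1) ^ (((k:ℤ)+1) - 2) = (g 1)^k * (g 1)⁻¹ := by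
      have : ((k:ℤ)+1) - 2 = (k:ℤ) + (-1) := by ring
      rw [this, zpow_add₀ hx, zpow_natCast, zpow_neg_one]
    rw [hz]; ring
  rw [Finset.sum_congr rfl key]
  have e0 : Zf 0 (3*0) * (av n a (3*0+1) *
        (g 0 ^ Lf n (3*0) 0 * g 1 ^ Lf n (3*0) 1 * g 2 ^ Lf n (3*0) 2 - 1))
      + Zf 0 (3*0+1) * (av n a (3*0+1+1) *
        (g 0 ^ Lf n (3*0+1) 0 * g 1 ^ Lf n (3*0+1) 1 * g 2 ^ Lf n (3*0+1) 2 - 1))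
      + Zf 0 (3*0+2) * (av n a (3*0+2+1) *
        (g 0 ^ Lf n (3*0+2) 0 * g 1 ^ Lf n (3*0+2) 1 * g 2 ^ Lf n (3*0+2) 2 - 1))
      = av n a 1 * (g 0 ^ (1:ℤ) * g 1 ^ ((n:ℤ)-1) * (g 2)⁻¹) - av n a 1 := by
    norm_num [Zf, Lf, zpow_neg_one, Matrix.cons_val_two, Matrix.tail_cons, Matrix.head_cons]
    ring
  rw [e0, Finset.sum_sub_distrib]
  have e1 : ∑ x ∈ Finset.range n, av n a (3*x+4) * (g 1 ^ x * (g 1)⁻¹ * (g 2)⁻¹)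
      = (∑ x ∈ Finset.range n, av n a (3*x+4) * g 1 ^ x) * ((g 1)⁻¹ * (g 2)⁻¹) := by
    rw [Finset.sum_mul]; exact Finset.sum_congr rfl fun x _ => by ring
  rw [e1, Om4_eq, om1_eq, zpow_one]
  ring

end Aux3

lemma theta2_eq {n : ℕ} {g : Fin 3 → ℝ} {a : Fin (3*n+3) → ℝ} (hx : g 1 ≠ 0) :
    Theta n g a 2 = (av n a 3 * (g 0 * (g 1) ^ ((n:ℤ)-2)) + (g 1)⁻¹ * Om6 n a (g 1))
        * (g 2)⁻¹ - om3 n a := by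
  rw [theta_apply, show 3*n+3 = 3*(n+1) from by ring, sum_range_triple,
    Finset.sum_range_succ']
  have key : ∀ k ∈ Finset.range n,
      (Zf 2 (3*(k+1)) * (av n a (3*(k+1)+1) *
          (g 0 ^ Lf n (3*(k+1)) 0 * g 1 ^ Lf n (3*(k+1)) 1 * g 2 ^ Lf n (3*(k+1)) 2 - 1))
        + Zf 2 (3*(k+1)+1) * (av n a (3*(k+1)+1+1) *
          (g 0 ^ Lf n (3*(k+1)+1) 0 * g 1 ^ Lf n (3*(k+1)+1) 1 * g 2 ^ Lf n (3*(k+1)+1) 2 - 1))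
        + Zf 2 (3*(k+1)+2) * (av n a (3*(k+1)+2+1) *
          (g 0 ^ Lf n (3*(k+1)+2) 0 * g 1 ^ Lf n (3*(k+1)+2) 1 * g 2 ^ Lf n (3*(k+1)+2) 2 - 1)))
      = av n a (3*k+6) * ((g 1)^k * (g 1)⁻¹ * (g 2)⁻¹) - av n a (3*k+6) := by
    intro k hk
    simp only [show 3*(k+1) = 3*k+3 from by ring, show 3*k+3+1 = 3*k+4 from by omega,
      show 3*k+4+1 = 3*k+5 from by omega, show 3*k+3+2 = 3*k+5 from by omega,
      show 3*k+5+1 = 3*k+6 from by omega]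
    simp only [Zf, Lf,
      show (3*k+3) % 3 = 0 from by omega, show (3*k+4) % 3 = 1 from by omega,
      show (3*k+5) % 3 = 2 from by omega,
      show (3*k+5) ≠ 0 from by omega, show (3*k+5) ≠ 1 from by omega,
      show (3*k+5) ≠ 2 from by omega, show (3*k+5)/3 = k+1 from by omega,
      if_true, if_false, eq_self_iff_true]
    norm_num [Matrix.cons_val_two, Matrix.tail_cons, Matrix.head_cons]
    have hz : (g 1) ^ (((k:ℤ)+1) - 2) = (g 1)^k * (g 1)⁻¹ := by
      have h : ((k:ℤ)+1) - 2 = (k:ℤ) + (-1) := by ring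
      rw [h, zpow_add₀ hx, zpow_natCast, zpow_neg_one]
    rw [hz]; ring
  rw [Finset.sum_congr rfl key]
  have e0 : Zf 2 (3*0) * (av n a (3*0+1) *
        (g 0 ^ Lf n (3*0) 0 * g 1 ^ Lf n (3*0) 1 * g 2 ^ Lf n (3*0) 2 - 1))
      + Zf 2 (3*0+1) * (av n a (3*0+1+1) *
        (g 0 ^ Lf n (3*0+1) 0 * g 1 ^ Lf n (3*0+1) 1 * g 2 ^ Lf n (3*0+1) 2 - 1))
      + Zf 2 (3*0+2) * (av n a (3*0+2+1) *
        (g 0 ^ Lf n (3*0+2) 0 * g 1 ^ Lf n (3*0+2) 1 * g 2 ^ Lf n (3*0+2) 2 - 1))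
      = av n a 3 * (g 0 ^ (1:ℤ) * g 1 ^ ((n:ℤ)-2) * (g 2)⁻¹) - av n a 3 := by
    norm_num [Zf, Lf, zpow_neg_one, Matrix.cons_val_two, Matrix.tail_cons, Matrix.head_cons]
    ring
  rw [e0, Finset.sum_sub_distrib]
  have e1 : ∑ x ∈ Finset.range n, av n a (3*x+6) * (g 1 ^ x * (g 1)⁻¹ * (g 2)⁻¹)
      = (∑ x ∈ Finset.range n, av n a (3*x+6) * g 1 ^ x) * ((g 1)⁻¹ * (g 2)⁻¹) := by
    rw [Finset.sum_mul]; exact Finset.sum_congr rfl fun x _ => by ring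
  rw [e1, Om6_eq, om3_eq, zpow_one]
  ring

lemma theta1_eq {n : ℕ} {g : Fin 3 → ℝ} {a : Fin (3*n+3) → ℝ} (hx : g 1 ≠ 0) :
    Theta n g a 1 = -(av n a 1) * (g 0 * (g 1) ^ ((n:ℤ)-1) * (g 2)⁻¹ - 1)
      - av n a 3 * (g 0 * (g 1) ^ ((n:ℤ)-2) * (g 2)⁻¹ - 1)
      + (g 0)⁻¹ * (g 1) ^ (-(n:ℤ)) * Om2 n a (g 1)
      - (om2 n a + av n a 1 + av n a 3) := by
  rw [theta_apply, show 3*n+3 = 3*(n+1) from by ring, sum_range_triple,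
    Finset.sum_range_succ']
  have key : ∀ k ∈ Finset.range n,
      (Zf 1 (3*(k+1)) * (av n a (3*(k+1)+1) *
          (g 0 ^ Lf n (3*(k+1)) 0 * g 1 ^ Lf n (3*(k+1)) 1 * g 2 ^ Lf n (3*(k+1)) 2 - 1))
        + Zf 1 (3*(k+1)+1) * (av n a (3*(k+1)+1+1) *
          (g 0 ^ Lf n (3*(k+1)+1) 0 * g 1 ^ Lf n (3*(k+1)+1) 1 * g 2 ^ Lf n (3*(k+1)+1) 2 - 1))
        + Zf 1 (3*(k+1)+2) * (av n a (3*(k+1)+2+1) *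
          (g 0 ^ Lf n (3*(k+1)+2) 0 * g 1 ^ Lf n (3*(k+1)+2) 1 * g 2 ^ Lf n (3*(k+1)+2) 2 - 1)))
      = av n a (3*k+5) * (g 1 ^ (k+1) * (g 1) ^ (-(n:ℤ)) * (g 0)⁻¹) - av n a (3*k+5) := by
    intro k hk
    simp only [show 3*(k+1) = 3*k+3 from by ring, show 3*k+3+1 = 3*k+4 from by omega,
      show 3*k+4+1 = 3*k+5 from by omega, show 3*k+3+2 = 3*k+5 from by omega,
      show 3*k+5+1 = 3*k+6 from by omega]
    simp only [Zf, Lf,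
      show (3*k+3) % 3 = 0 from by omega, show (3*k+4) % 3 = 1 from by omega,
      show (3*k+5) % 3 = 2 from by omega,
      show (3*k+3) ≠ 0 from by omega, show (3*k+3) ≠ 2 from by omega,
      show (3*k+4) ≠ 0 from by omega, show (3*k+4) ≠ 1 from by omega,
      show (3*k+4) ≠ 2 from by omega, show (3*k+4)/3 = k+1 from by omega,
      show (3*k+5) ≠ 0 from by omega, show (3*k+5) ≠ 2 from by omega,
      if_true, if_false, eq_self_iff_true]
    norm_num [Matrix.cons_val_two, Matrix.tail_cons, Matrix.head_cons]
    have hz : (g 1) ^ (((k:ℤ)+1) - (n:ℤ)) = (g 1)^(k+1) * (g 1) ^ (-(n:ℤ)) := by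
      have h : ((k:ℤ)+1) - (n:ℤ) = (((k+1:ℕ):ℤ)) + (-(n:ℤ)) := by push_cast; ring
      rw [h, zpow_add₀ hx, zpow_natCast]
    rw [hz, zpow_neg, zpow_natCast, ← inv_pow]; ring
  rw [Finset.sum_congr rfl key]
  have e0 : Zf 1 (3*0) * (av n a (3*0+1) *
        (g 0 ^ Lf n (3*0) 0 * g 1 ^ Lf n (3*0) 1 * g 2 ^ Lf n (3*0) 2 - 1))
      + Zf 1 (3*0+1) * (av n a (3*0+1+1) *
        (g 0 ^ Lf n (3*0+1) 0 * g 1 ^ Lf n (3*0+1) 1 * g 2 ^ Lf n (3*0+1) 2 - 1))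
      + Zf 1 (3*0+2) * (av n a (3*0+2+1) *
        (g 0 ^ Lf n (3*0+2) 0 * g 1 ^ Lf n (3*0+2) 1 * g 2 ^ Lf n (3*0+2) 2 - 1))
      = -(av n a 1) * (g 0 * g 1 ^ ((n:ℤ)-1) * (g 2)⁻¹ - 1)
        + av n a 2 * ((g 0)⁻¹ * g 1 ^ (-(n:ℤ)) - 1)
        - av n a 3 * (g 0 * g 1 ^ ((n:ℤ)-2) * (g 2)⁻¹ - 1) := by
    norm_num [Zf, Lf, zpow_neg_one, Matrix.cons_val_two, Matrix.tail_cons, Matrix.head_cons]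
    ring
  rw [e0, Finset.sum_sub_distrib]
  have e1 : ∑ x ∈ Finset.range n, av n a (3*x+5) * (g 1 ^ (x+1) * (g 1) ^ (-(n:ℤ)) * (g 0)⁻¹)
      = (∑ x ∈ Finset.range n, av n a (3*x+5) * g 1 ^ (x+1)) * ((g 1) ^ (-(n:ℤ)) * (g 0)⁻¹) := by
    rw [Finset.sum_mul]; exact Finset.sum_congr rfl fun x _ => by ring
  rw [e1, Om2_eq, om2_eq]
  ring
section Aux4

variable {n : ℕ} {g : Fin 3 → ℝ} {a : Fin (3*n+3) → ℝ}

lemma av_pos (ha : ∀ j, 0 < a j) {j : ℕ} (h : j - 1 < 3*n+3) : 0 < av n a j := by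
  rw [av, dif_pos h]; exact ha _

lemma om1_pos (ha : ∀ j, 0 < a j) : 0 < om1 n a :=
  Finset.sum_pos (fun k hk => av_pos ha (by simp at hk; omega)) ⟨0, by simp⟩

lemma om3_pos (ha : ∀ j, 0 < a j) : 0 < om3 n a :=
  Finset.sum_pos (fun k hk => av_pos ha (by simp at hk; omega)) ⟨0, by simp⟩

lemma Om2_pos (ha : ∀ j, 0 < a j) {x : ℝ} (hx : 0 < x) : 0 < Om2 n a x :=
  Finset.sum_pos (fun k hk => mul_pos (av_pos ha (by simp at hk; omega)) (pow_pos hx _))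
    ⟨0, by simp⟩

lemma Om4_pos (hn : 1 ≤ n) (ha : ∀ j, 0 < a j) {x : ℝ} (hx : 0 < x) : 0 < Om4 n a x :=
  Finset.sum_pos (fun k hk => mul_pos (av_pos ha (by simp at hk; omega)) (pow_pos hx _))
    ⟨1, by simp; omega⟩

lemma Om6_pos (hn : 1 ≤ n) (ha : ∀ j, 0 < a j) {x : ℝ} (hx : 0 < x) : 0 < Om6 n a x :=
  Finset.sum_pos (fun k hk => mul_pos (av_pos ha (by simp at hk; omega)) (pow_pos hx _))
    ⟨1, by simp; omega⟩

lemma sigma_pos (ha : ∀ j, 0 < a j) : 0 < om1 n a + om2 n a + om3 n a := by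
  have h : om1 n a + om2 n a + om3 n a = (∑ k ∈ Finset.range n, av n a (3*k+4))
      + (∑ k ∈ Finset.range n, av n a (3*k+5))
      + (∑ k ∈ Finset.range n, av n a (3*k+6)) + av n a 2 := by
    rw [om1_eq, om2_eq, om3_eq]; ring
  have h4 : 0 ≤ ∑ k ∈ Finset.range n, av n a (3*k+4) :=
    Finset.sum_nonneg fun k hk => (av_pos ha (by simp at hk; omega)).le
  have h5 : 0 ≤ ∑ k ∈ Finset.range n, av n a (3*k+5) :=
    Finset.sum_nonneg fun k hk => (av_pos ha (by simp at hk; omega)).le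
  have h6 : 0 ≤ ∑ k ∈ Finset.range n, av n a (3*k+6) :=
    Finset.sum_nonneg fun k hk => (av_pos ha (by simp at hk; omega)).le
  have h2 : 0 < av n a 2 := av_pos ha (by omega)
  linarith

lemma quad_unique {A B C η η' : ℝ} (hA : 0 < A) (hC : 0 < C) (hη : 0 < η) (hη' : 0 < η')
    (h : A + B*η - C*η^2 = 0) (h' : A + B*η' - C*η'^2 = 0) : η' = η := by
  have hd : (η - η') * (B - C*(η+η')) = 0 := by linear_combination h - h'
  rcases mul_eq_zero.mp hd with h0 | h0
  · linarith [sub_eq_zero.mp h0]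
  · have hB : B = C*(η+η') := by linarith
    nlinarith [mul_pos (mul_pos hC hη) hη']

lemma eq1 (hn : 2 ≤ n) (hg : ∀ i, 0 < g i) (h0 : Theta n g a 0 = 0) :
    av n a 1 * (g 0 * (g 1)^(n-1)) * (g 1) + Om4 n a (g 1) = om1 n a * g 2 * g 1 := by
  rw [theta0_eq (hg 1).ne'] at h0
  rw [show ((n:ℤ)-1) = ((n-1:ℕ):ℤ) from by omega, zpow_natCast] at h0
  have h1 := (hg 1).ne'
  have h2 := (hg 2).ne'
  field_simp at h0
  linarith

lemma eq3 (hn : 2 ≤ n) (hg : ∀ i, 0 < g i) (h0 : Theta n g a 2 = 0) :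
    av n a 3 * (g 0 * (g 1)^(n-1)) + Om6 n a (g 1) = om3 n a * g 2 * g 1 := by
  rw [theta2_eq (hg 1).ne'] at h0
  rw [show ((n:ℤ)-2) = ((n-2:ℕ):ℤ) from by omega, zpow_natCast] at h0
  obtain ⟨m, rfl⟩ : ∃ m, n = m + 2 := ⟨n-2, by omega⟩
  rw [show m+2-1 = m+1 from by omega, show m+2-2 = m from by omega] at *
  have h1 := (hg 1).ne'
  have h2 := (hg 2).ne'
  field_simp at h0
  rw [pow_succ]
  linear_combination h0

lemma eq2 (hn : 2 ≤ n) (hg : ∀ i, 0 < g i) (h0 : Theta n g a 1 = 0) :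
    (av n a 1 * g 1 + av n a 3) * (g 0 * (g 1)^(n-1))^2
      + om2 n a * g 1 * (g 0 * (g 1)^(n-1)) * g 2 = Om2 n a (g 1) * g 2 := by
  rw [theta1_eq (hg 1).ne'] at h0
  rw [show ((n:ℤ)-1) = ((n-1:ℕ):ℤ) from by omega, zpow_natCast,
    show ((n:ℤ)-2) = ((n-2:ℕ):ℤ) from by omega, zpow_natCast,
    zpow_neg, zpow_natCast] at h0
  obtain ⟨m, rfl⟩ : ∃ m, n = m + 2 := ⟨n-2, by omega⟩
  rw [show m+2-1 = m+1 from by omega, show m+2-2 = m from by omega] at *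
  have h1 := (hg 1).ne'
  have h2 := (hg 2).ne'
  have h3 := (hg 0).ne'
  field_simp at h0
  have key : ((av (m+2) a 1 * g 1 + av (m+2) a 3) * (g 0 * (g 1)^(m+1))^2
      + om2 (m+2) a * g 1 * (g 0 * (g 1)^(m+1)) * g 2) * g 2
      = (Om2 (m+2) a (g 1) * g 2) * g 2 := by linear_combination -g 2 * h0
  exact mul_right_cancel₀ h2 key

end Aux4

section Main

lemma xistar_pos {n : ℕ} {a : Fin (3*n+3) → ℝ} (ha : ∀ j, 0 < a j) :
    0 < xistar n a := by
  have h1 : 0 < av n a 1 := av_pos ha (by omega)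
  have h3 : 0 < av n a 3 := av_pos ha (by omega)
  exact div_pos (mul_pos (om1_pos ha) h3) (mul_pos h1 (om3_pos ha))

lemma xistar_id {n : ℕ} {a : Fin (3*n+3) → ℝ} (ha : ∀ j, 0 < a j) :
    av n a 1 * om3 n a * xistar n a = om1 n a * av n a 3 := by
  have h1 : av n a 1 ≠ 0 := (av_pos ha (by omega)).ne'
  have h3 : om3 n a ≠ 0 := (om3_pos ha).ne'
  have hA : av n a 1 * om3 n a ≠ 0 := mul_ne_zero h1 h3
  rw [xistar]
  field_simp

lemma master {n : ℕ} (hn : 2 ≤ n) {a : Fin (3*n+3) → ℝ} (ha : ∀ j, 0 < a j)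
    (g : Fin 3 → ℝ) (hg : ∀ i, 0 < g i) (hg1 : g 1 = xistar n a)
    (hΘ : Theta n g a = 0) :
    om1 n a * Om6 n a (xistar n a) = om3 n a * Om4 n a (xistar n a) ∧
    0 < g 0 * (xistar n a)^(n-1) ∧
    g 0 = (xistar n a) ^ ((1:ℤ) - (n:ℤ)) * (g 0 * (xistar n a)^(n-1)) ∧
    g 2 = (xistar n a)⁻¹ * (Om4 n a (xistar n a) / om1 n a
        + av n a 1 * xistar n a / om1 n a * (g 0 * (xistar n a)^(n-1))) ∧
    Ap n a (xistar n a) + Bp n a (xistar n a) * (g 0 * (xistar n a)^(n-1))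
      - Cp n a (xistar n a) * (g 0 * (xistar n a)^(n-1))^2 = 0 := by
  set x := xistar n a with hxdef
  have hx : 0 < x := xistar_pos ha
  have hxid := xistar_id (n := n) ha
  have h1 := eq1 hn hg (congrFun hΘ 0)
  have h2 := eq2 hn hg (congrFun hΘ 1)
  have h3 := eq3 hn hg (congrFun hΘ 2)
  rw [hg1] at h1 h2 h3
  have hη : 0 < g 0 * x^(n-1) := mul_pos (hg 0) (pow_pos hx _)
  have hom1 : 0 < om1 n a := om1_pos ha
  refine ⟨?_, hη, ?_, ?_, ?_⟩
  · linear_combination om1 n a * h3 - om3 n a * h1 + (g 0 * x^(n-1)) * hxid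
  · have hone : x ^ ((1:ℤ)-(n:ℤ)) * x^(n-1) = 1 := by
      rw [← zpow_natCast x (n-1), ← zpow_add₀ hx.ne',
        show (1:ℤ) - (n:ℤ) + ((n-1:ℕ):ℤ) = 0 from by omega, zpow_zero]
    rw [show x ^ ((1:ℤ)-(n:ℤ)) * (g 0 * x^(n-1)) = (x ^ ((1:ℤ)-(n:ℤ)) * x^(n-1)) * g 0
      from by ring, hone, one_mul]
  · field_simp
    linear_combination -h1
  · rw [Ap, Bp, Cp]
    linear_combination (Om2 n a x - om2 n a * x * (g 0 * x^(n-1))) * h1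
      + (Om2 n a x - om2 n a * x * (g 0 * x^(n-1))) * h3
      - (om1 n a + om3 n a) * x * h2

end Main

section Final

lemma Ap_pos {n : ℕ} (hn : 2 ≤ n) {a : Fin (3*n+3) → ℝ} (ha : ∀ j, 0 < a j)
    {x : ℝ} (hx : 0 < x) : 0 < Ap n a x := by
  rw [Ap]
  exact mul_pos (add_pos (Om4_pos (by omega) ha hx) (Om6_pos (by omega) ha hx))
    (Om2_pos ha hx)

lemma Cp_pos {n : ℕ} {a : Fin (3*n+3) → ℝ} (ha : ∀ j, 0 < a j)
    {x : ℝ} (hx : 0 < x) : 0 < Cp n a x := by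
  rw [Cp]
  have h1 : 0 < av n a 1 := av_pos ha (by omega)
  have h3 : 0 < av n a 3 := av_pos ha (by omega)
  exact mul_pos (mul_pos hx (by nlinarith)) (sigma_pos ha)

end Final


/-- (The exceptional case `ξ = ξ*`.) There is at most one
`g ∈ ℝ_{>0}³` with `g₂ = ξ*` and `Θ(g,a) = 0`; such a `g` can exist only if
`ω1·Ω6(ξ*) = ω3·Ω4(ξ*)`, and then `g₁ = (ξ*)^{1−n}η`,
`g₃ = (ξ*)⁻¹(Ω4(ξ*)/ω1 + (a₁ξ*/ω1)η)` for the unique positive root `η` of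
`A(ξ*) + B(ξ*)η − C(ξ*)η² = 0`. -/
theorem exceptional_case_xistar (n : ℕ) (hn : 2 ≤ n)
    (a : Fin (3*n+3) → ℝ) (ha : ∀ j, 0 < a j) :
    (∀ g g' : Fin 3 → ℝ,
      (∀ i, 0 < g i) → g 1 = xistar n a → Theta n g a = 0 →
      (∀ i, 0 < g' i) → g' 1 = xistar n a → Theta n g' a = 0 → g = g') ∧
    ((∃ g : Fin 3 → ℝ, (∀ i, 0 < g i) ∧ g 1 = xistar n a ∧ Theta n g a = 0) →
      om1 n a * Om6 n a (xistar n a) = om3 n a * Om4 n a (xistar n a)) ∧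
    (∀ g : Fin 3 → ℝ, (∀ i, 0 < g i) → g 1 = xistar n a → Theta n g a = 0 →
      ∃ η : ℝ, 0 < η ∧
        g 0 = (xistar n a) ^ ((1 : ℤ) - (n : ℤ)) * η ∧
        g 2 = (xistar n a)⁻¹ *
          (Om4 n a (xistar n a) / om1 n a + av n a 1 * xistar n a / om1 n a * η) ∧
        Ap n a (xistar n a) + Bp n a (xistar n a) * η
          - Cp n a (xistar n a) * η^2 = 0 ∧
        ∀ η' : ℝ, 0 < η' →
          Ap n a (xistar n a) + Bp n a (xistar n a) * η'
            - Cp n a (xistar n a) * η'^2 = 0 → η' = η) := by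
  have hx : 0 < xistar n a := xistar_pos ha
  have hA : 0 < Ap n a (xistar n a) := Ap_pos hn ha hx
  have hC : 0 < Cp n a (xistar n a) := Cp_pos ha hx
  refine ⟨?_, ?_, ?_⟩
  · intro g g' hg hg1 hΘ hg' hg1' hΘ'
    obtain ⟨-, hpos, h0, h2, hq⟩ := master hn ha g hg hg1 hΘ
    obtain ⟨-, hpos', h0', h2', hq'⟩ := master hn ha g' hg' hg1' hΘ'
    have hee : g' 0 * (xistar n a)^(n-1) = g 0 * (xistar n a)^(n-1) :=
      quad_unique hA hC hpos hpos' hq hq'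
    funext i
    fin_cases i <;> simp only [Fin.zero_eta, Fin.mk_one, Fin.isValue]
    · rw [h0, h0', hee]
    · rw [hg1, hg1']
    · rw [show (⟨2, by omega⟩ : Fin 3) = 2 from rfl, h2, h2', hee]
  · rintro ⟨g, hg, hg1, hΘ⟩
    exact (master hn ha g hg hg1 hΘ).1
  · intro g hg hg1 hΘ
    obtain ⟨-, hpos, h0, h2, hq⟩ := master hn ha g hg hg1 hΘ
    exact ⟨g 0 * (xistar n a)^(n-1), hpos, h0, h2, hq,
      fun η' hη' hq' => quad_unique hA hC hpos hη' hq hq'⟩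

end Phos
end

section
/- Let α > 0 and let a = α·𝟙 ∈ ℝ_{>0}^{3+3n} be the constant vector with all entries equal to α. Then F1 vanishes identically, P(ξ) = (2α²/(n+1)²)(ξⁿ − 1)(ξ^{n+1} − 1), whose only positive real zero is ξ = 1 (a zero of multiplicity two), and the only g ∈ ℝ_{>0}^3 with Θ(g,a) = 0 is g = (1,1,1). Consequently, for every λ ∈ ℝ_{>0}^{3n}, a is the unique positive steady state of ẋ = S diag(κ(a,λ)) Φ(x) in the coset { x ∈ ℝ_{>0}^{3+3n} : Z x = Z a }. -/
open Finset

open Finset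
namespace Phos
section Aux

lemma sum_range_three (m : ℕ) (f : ℕ → ℝ) :
    ∑ j ∈ range (3*m), f j = ∑ q ∈ range m, (f (3*q) + f (3*q+1) + f (3*q+2)) := by
  induction m with
  | zero => simp
  | succ m ih =>
      rw [show 3*(m+1) = 3*m+1+1+1 by ring, Finset.sum_range_succ, Finset.sum_range_succ,
        Finset.sum_range_succ, ih, Finset.sum_range_succ]
      ring

lemma sum_range_six (m : ℕ) (f : ℕ → ℝ) :
    ∑ j ∈ range (6*m), f j = ∑ q ∈ range m,
      (f (6*q) + f (6*q+1) + f (6*q+2) + f (6*q+3) + f (6*q+4) + f (6*q+5)) := by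
  induction m with
  | zero => simp
  | succ m ih =>
      rw [show 6*(m+1) = 6*m+1+1+1+1+1+1 by ring, Finset.sum_range_succ, Finset.sum_range_succ,
        Finset.sum_range_succ, Finset.sum_range_succ, Finset.sum_range_succ,
        Finset.sum_range_succ, ih, Finset.sum_range_succ]
      ring

lemma fin_sum_eq (N : ℕ) (G : Fin N → ℝ) :
    ∑ r, G r = ∑ r ∈ range N, (if h : r < N then G ⟨r, h⟩ else 0) := by
  rw [← Fin.sum_univ_eq_sum_range (fun r => if h : r < N then G ⟨r, h⟩ else 0) N]
  exact Finset.sum_congr rfl fun r _ => by simp [r.isLt]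

/-- padded version of a vector -/
def pad (N : ℕ) (x : Fin N → ℝ) : ℕ → ℝ := fun j => if h : j < N then x ⟨j, h⟩ else 0

lemma pad_lt (N : ℕ) (x : Fin N → ℝ) (j : ℕ) (h : j < N) : pad N x j = x ⟨j, h⟩ := dif_pos h

lemma Smat_apply (n i s : ℕ) (hs : s < 6) (hi : i < n) (m : Fin (3*n+3)) (h : 6*i+s < 6*n) :
    Smat n m ⟨6*i+s, h⟩ =
    (![e (3*n+3) (1+3*(i+1)) - e (3*n+3) 1 - e (3*n+3) (3*(i+1)-1),
       e (3*n+3) 1 + e (3*n+3) (3*(i+1)-1) - e (3*n+3) (1+3*(i+1)),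
       e (3*n+3) 1 + e (3*n+3) (2+3*(i+1)) - e (3*n+3) (1+3*(i+1)),
       e (3*n+3) (3+3*(i+1)) - e (3*n+3) 3 - e (3*n+3) (2+3*(i+1)),
       e (3*n+3) 3 + e (3*n+3) (2+3*(i+1)) - e (3*n+3) (3+3*(i+1)),
       e (3*n+3) 3 + e (3*n+3) (3*(i+1)-1) - e (3*n+3) (3+3*(i+1))]) ⟨s, hs⟩ m := by
  have h1 : (6*i+s) / 6 = i := by omega
  have h2 : (6*i+s) % 6 = s := by omega
  simp only [Smat, Matrix.of_apply, h1, h2]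

/-- master formula for `S.mulVec` -/
lemma S_mulVec (n : ℕ) (v : Fin (6*n) → ℝ) (m : Fin (3*n+3)) :
    (Smat n).mulVec v m = ∑ i ∈ range n,
      ( (if (m:ℕ)+1 = 1 then 1 else 0) *
          (-(pad (6*n) v (6*i)) + pad (6*n) v (6*i+1) + pad (6*n) v (6*i+2))
      + (if (m:ℕ)+1 = 3 then 1 else 0) *
          (-(pad (6*n) v (6*i+3)) + pad (6*n) v (6*i+4) + pad (6*n) v (6*i+5))
      + (if (m:ℕ)+1 = 3*(i+1)-1 then 1 else 0) *
          (-(pad (6*n) v (6*i)) + pad (6*n) v (6*i+1) + pad (6*n) v (6*i+5))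
      + (if (m:ℕ)+1 = 1+3*(i+1) then 1 else 0) *
          (pad (6*n) v (6*i) - pad (6*n) v (6*i+1) - pad (6*n) v (6*i+2))
      + (if (m:ℕ)+1 = 2+3*(i+1) then 1 else 0) *
          (pad (6*n) v (6*i+2) - pad (6*n) v (6*i+3) + pad (6*n) v (6*i+4))
      + (if (m:ℕ)+1 = 3+3*(i+1) then 1 else 0) *
          (pad (6*n) v (6*i+3) - pad (6*n) v (6*i+4) - pad (6*n) v (6*i+5)) ) := by
  have : (Smat n).mulVec v m = ∑ r ∈ range (6*n),
      (if h : r < 6*n then Smat n m ⟨r, h⟩ * v ⟨r, h⟩ else 0) := by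
    rw [Matrix.mulVec, dotProduct, fin_sum_eq (6*n) (fun r => Smat n m r * v r)]
  rw [this, sum_range_six]
  refine Finset.sum_congr rfl fun i hi => ?_
  have hi' : i < n := Finset.mem_range.mp hi
  have e0 : 6*i < 6*n := by omega
  have e1 : 6*i+1 < 6*n := by omega
  have e2 : 6*i+2 < 6*n := by omega
  have e3 : 6*i+3 < 6*n := by omega
  have e4 : 6*i+4 < 6*n := by omega
  have e5 : 6*i+5 < 6*n := by omega
  rw [show (6*i : ℕ) = 6*i+0 by ring] at e0 ⊢
  rw [dif_pos e0, dif_pos e1, dif_pos e2, dif_pos e3, dif_pos e4, dif_pos e5,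
    Smat_apply n i 0 (by omega) hi' m, Smat_apply n i 1 (by omega) hi' m,
    Smat_apply n i 2 (by omega) hi' m, Smat_apply n i 3 (by omega) hi' m,
    Smat_apply n i 4 (by omega) hi' m, Smat_apply n i 5 (by omega) hi' m]
  show ((e (3*n+3) (1+3*(i+1)) - e (3*n+3) 1 - e (3*n+3) (3*(i+1)-1)) m) * v ⟨6*i+0, e0⟩
      + ((e (3*n+3) 1 + e (3*n+3) (3*(i+1)-1) - e (3*n+3) (1+3*(i+1))) m) * v ⟨6*i+1, e1⟩
      + ((e (3*n+3) 1 + e (3*n+3) (2+3*(i+1)) - e (3*n+3) (1+3*(i+1))) m) * v ⟨6*i+2, e2⟩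
      + ((e (3*n+3) (3+3*(i+1)) - e (3*n+3) 3 - e (3*n+3) (2+3*(i+1))) m) * v ⟨6*i+3, e3⟩
      + ((e (3*n+3) 3 + e (3*n+3) (2+3*(i+1)) - e (3*n+3) (3+3*(i+1))) m) * v ⟨6*i+4, e4⟩
      + ((e (3*n+3) 3 + e (3*n+3) (3*(i+1)-1) - e (3*n+3) (3+3*(i+1))) m) * v ⟨6*i+5, e5⟩ = _
  simp only [Pi.add_apply, Pi.sub_apply, e, pad, dif_pos e0, dif_pos e1, dif_pos e2,
    dif_pos e3, dif_pos e4, dif_pos e5]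
  ring

end Aux
end Phos
namespace Phos
open Finset
section Aux2

lemma prod_pow_eN (N j : ℕ) (hj1 : 1 ≤ j) (hjN : j ≤ N) (x : Fin N → ℝ) :
    ∏ m, x m ^ eN N j m = x ⟨j-1, by omega⟩ := by
  rw [Finset.prod_eq_single (⟨j-1, by omega⟩ : Fin N)]
  · have : eN N j ⟨j-1, by omega⟩ = 1 := by simp only [eN]; rw [if_pos (by omega)]
    rw [this, pow_one]
  · intro m _ hm
    have : (m : ℕ) + 1 ≠ j := by
      intro hc; exact hm (by ext; simp; omega)
    simp [eN, this]
  · simp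

lemma prod_pow_add (N : ℕ) (x : Fin N → ℝ) (f g : Fin N → ℕ) :
    ∏ m, x m ^ (f m + g m) = (∏ m, x m ^ f m) * (∏ m, x m ^ g m) := by
  rw [← Finset.prod_mul_distrib]
  exact Finset.prod_congr rfl fun m _ => pow_add ..

lemma Ymat_apply (n i s : ℕ) (hs : s < 6) (hi : i < n) (m : Fin (3*n+3)) (h : 6*i+s < 6*n) :
    Ymat n m ⟨6*i+s, h⟩ =
    (![eN (3*n+3) 1 + eN (3*n+3) (3*(i+1)-1),
       eN (3*n+3) (1+3*(i+1)),
       eN (3*n+3) (1+3*(i+1)),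
       eN (3*n+3) 3 + eN (3*n+3) (2+3*(i+1)),
       eN (3*n+3) (3+3*(i+1)),
       eN (3*n+3) (3+3*(i+1))]) ⟨s, hs⟩ m := by
  have h1 : (6*i+s) / 6 = i := by omega
  have h2 : (6*i+s) % 6 = s := by omega
  simp only [Ymat, Matrix.of_apply, h1, h2]

lemma Phi_block (n i : ℕ) (hi : i < n) (x : Fin (3*n+3) → ℝ)
    (h0 : 6*i < 6*n) (h1 : 6*i+1 < 6*n) (h2 : 6*i+2 < 6*n) (h3 : 6*i+3 < 6*n)
    (h4 : 6*i+4 < 6*n) (h5 : 6*i+5 < 6*n) :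
    Phi n x ⟨6*i, h0⟩ = pad (3*n+3) x 0 * pad (3*n+3) x (3*i+1) ∧
    Phi n x ⟨6*i+1, h1⟩ = pad (3*n+3) x (3*i+3) ∧
    Phi n x ⟨6*i+2, h2⟩ = pad (3*n+3) x (3*i+3) ∧
    Phi n x ⟨6*i+3, h3⟩ = pad (3*n+3) x 2 * pad (3*n+3) x (3*i+4) ∧
    Phi n x ⟨6*i+4, h4⟩ = pad (3*n+3) x (3*i+5) ∧
    Phi n x ⟨6*i+5, h5⟩ = pad (3*n+3) x (3*i+5) := by
  have key : ∀ (s : ℕ) (hs : s < 6) (h : 6*i+s < 6*n), Phi n x ⟨6*i+s, h⟩ =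
      ∏ m, x m ^ ((![eN (3*n+3) 1 + eN (3*n+3) (3*(i+1)-1),
       eN (3*n+3) (1+3*(i+1)), eN (3*n+3) (1+3*(i+1)),
       eN (3*n+3) 3 + eN (3*n+3) (2+3*(i+1)),
       eN (3*n+3) (3+3*(i+1)), eN (3*n+3) (3+3*(i+1))]) ⟨s, hs⟩ m) := by
    intro s hs h
    exact Finset.prod_congr rfl fun m _ => by rw [Ymat_apply n i s hs hi m h]
  have e30 : 6*i+0 < 6*n := by omega
  have q1 : 3*(i+1)-1 = 3*i+2 := by omega
  have q2 : 1+3*(i+1) = 3*i+4 := by omega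
  have q3 : 2+3*(i+1) = 3*i+5 := by omega
  have q4 : 3+3*(i+1) = 3*i+6 := by omega
  refine ⟨?_, ?_, ?_, ?_, ?_, ?_⟩
  · have := key 0 (by omega) (by omega)
    rw [show (⟨6*i, h0⟩ : Fin (6*n)) = ⟨6*i+0, e30⟩ by rfl, this]
    show (∏ m, x m ^ ((eN (3*n+3) 1 + eN (3*n+3) (3*(i+1)-1)) m)) = _
    simp only [Pi.add_apply]
    rw [prod_pow_add, prod_pow_eN _ 1 (by omega) (by omega),
      prod_pow_eN _ (3*(i+1)-1) (by omega) (by omega),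
      pad_lt _ x 0 (by omega), pad_lt _ x (3*i+1) (by omega)]
    congr 1 <;> (congr 1; simp only [Fin.mk.injEq]; omega)
  · rw [key 1 (by omega) h1]
    show (∏ m, x m ^ (eN (3*n+3) (1+3*(i+1))) m) = _
    rw [prod_pow_eN _ (1+3*(i+1)) (by omega) (by omega), pad_lt _ x (3*i+3) (by omega)]
    congr 1
    simp only [Fin.mk.injEq]
    omega
  · rw [key 2 (by omega) h2]
    show (∏ m, x m ^ (eN (3*n+3) (1+3*(i+1))) m) = _
    rw [prod_pow_eN _ (1+3*(i+1)) (by omega) (by omega), pad_lt _ x (3*i+3) (by omega)]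
    congr 1
    simp only [Fin.mk.injEq]
    omega
  · rw [key 3 (by omega) h3]
    show (∏ m, x m ^ ((eN (3*n+3) 3 + eN (3*n+3) (2+3*(i+1))) m)) = _
    simp only [Pi.add_apply]
    rw [prod_pow_add, prod_pow_eN _ 3 (by omega) (by omega),
      prod_pow_eN _ (2+3*(i+1)) (by omega) (by omega),
      pad_lt _ x 2 (by omega), pad_lt _ x (3*i+4) (by omega)]
    congr 1 <;> (congr 1; simp only [Fin.mk.injEq]; omega)
  · rw [key 4 (by omega) h4]
    show (∏ m, x m ^ (eN (3*n+3) (3+3*(i+1))) m) = _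
    rw [prod_pow_eN _ (3+3*(i+1)) (by omega) (by omega), pad_lt _ x (3*i+5) (by omega)]
    congr 1
    simp only [Fin.mk.injEq]
    omega
  · rw [key 5 (by omega) h5]
    show (∏ m, x m ^ (eN (3*n+3) (3+3*(i+1))) m) = _
    rw [prod_pow_eN _ (3+3*(i+1)) (by omega) (by omega), pad_lt _ x (3*i+5) (by omega)]
    congr 1
    simp only [Fin.mk.injEq]
    omega

end Aux2
end Phos
namespace Phos
open Finset
section Aux3

lemma E_mulVec (n i s : ℕ) (hs : s < 6) (hi : i < n) (lam : Fin (3*n) → ℝ) (h : 6*i+s < 6*n) :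
    (Emat n).mulVec lam ⟨6*i+s, h⟩ =
      E0 ⟨s, hs⟩ ⟨0, by omega⟩ * pad (3*n) lam (3*i) +
      E0 ⟨s, hs⟩ ⟨1, by omega⟩ * pad (3*n) lam (3*i+1) +
      E0 ⟨s, hs⟩ ⟨2, by omega⟩ * pad (3*n) lam (3*i+2) := by
  have hrw : (Emat n).mulVec lam ⟨6*i+s, h⟩ = ∑ c ∈ range (3*n),
      (if hc : c < 3*n then Emat n ⟨6*i+s, h⟩ ⟨c, hc⟩ * lam ⟨c, hc⟩ else 0) := by
    rw [Matrix.mulVec, dotProduct, fin_sum_eq (3*n) (fun c => Emat n ⟨6*i+s, h⟩ c * lam c)]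
  rw [hrw, sum_range_three]
  rw [Finset.sum_eq_single_of_mem i (Finset.mem_range.mpr hi)]
  · have c0 : 3*i < 3*n := by omega
    have c1 : 3*i+1 < 3*n := by omega
    have c2 : 3*i+2 < 3*n := by omega
    rw [dif_pos c0, dif_pos c1, dif_pos c2]
    have key : ∀ (j : ℕ) (hj : j < 3) (hc : 3*i+j < 3*n),
        Emat n ⟨6*i+s, h⟩ ⟨3*i+j, hc⟩ = E0 ⟨s, hs⟩ ⟨j, hj⟩ := by
      intro j hj hc
      have d1 : (6*i+s)/6 = i := by omega
      have d2 : (3*i+j)/3 = i := by omega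
      have d3 : (6*i+s)%6 = s := by omega
      have d4 : (3*i+j)%3 = j := by omega
      simp only [Emat, Matrix.of_apply, d1, d2, d3, d4]
      simp
    have k0 : Emat n ⟨6*i+s, h⟩ ⟨3*i, c0⟩ = E0 ⟨s, hs⟩ ⟨0, by omega⟩ := key 0 (by omega) c0
    have k1 : Emat n ⟨6*i+s, h⟩ ⟨3*i+1, c1⟩ = E0 ⟨s, hs⟩ ⟨1, by omega⟩ := key 1 (by omega) c1
    have k2 : Emat n ⟨6*i+s, h⟩ ⟨3*i+2, c2⟩ = E0 ⟨s, hs⟩ ⟨2, by omega⟩ := key 2 (by omega) c2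
    rw [k0, k1, k2, pad_lt _ lam (3*i) c0, pad_lt _ lam (3*i+1) c1, pad_lt _ lam (3*i+2) c2]
  · intro q hq hqi
    have hq' : q < n := Finset.mem_range.mp hq
    have c0 : 3*q < 3*n := by omega
    have c1 : 3*q+1 < 3*n := by omega
    have c2 : 3*q+2 < 3*n := by omega
    rw [dif_pos c0, dif_pos c1, dif_pos c2]
    have key : ∀ (j : ℕ) (hj : j < 3) (hc : 3*q+j < 3*n),
        Emat n ⟨6*i+s, h⟩ ⟨3*q+j, hc⟩ = 0 := by
      intro j hj hc
      have d1 : (6*i+s)/6 = i := by omega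
      have d2 : (3*q+j)/3 = q := by omega
      simp only [Emat, Matrix.of_apply, d1, d2]
      exact if_neg (fun hcon => hqi hcon.symm)
    have k0 : Emat n ⟨6*i+s, h⟩ ⟨3*q, c0⟩ = 0 := key 0 (by omega) c0
    have k1 : Emat n ⟨6*i+s, h⟩ ⟨3*q+1, c1⟩ = 0 := key 1 (by omega) c1
    have k2 : Emat n ⟨6*i+s, h⟩ ⟨3*q+2, c2⟩ = 0 := key 2 (by omega) c2
    rw [k0, k1, k2]
    ring

end Aux3
end Phos
namespace Phos
open Finset
section Aux4

lemma S_mulVec_C (n q : ℕ) (hq1 : 1 ≤ q) (hqn : q ≤ n) (v : Fin (6*n) → ℝ)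
    (hm : 3*q < 3*n+3) :
    (Smat n).mulVec v ⟨3*q, hm⟩ =
      pad (6*n) v (6*(q-1)) - pad (6*n) v (6*(q-1)+1) - pad (6*n) v (6*(q-1)+2) := by
  rw [S_mulVec]
  have hval : ((⟨3*q, hm⟩ : Fin (3*n+3)) : ℕ) = 3*q := rfl
  simp only [hval]
  rw [Finset.sum_eq_single_of_mem (q-1) (Finset.mem_range.mpr (by omega))
    (fun i hi hne => by
      have hi' : i < n := Finset.mem_range.mp hi
      rw [if_neg (by omega : ¬ 3*q+1 = 1), if_neg (by omega : ¬ 3*q+1 = 3),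
        if_neg (by omega : ¬ 3*q+1 = 3*(i+1)-1), if_neg (by omega : ¬ 3*q+1 = 1+3*(i+1)),
        if_neg (by omega : ¬ 3*q+1 = 2+3*(i+1)), if_neg (by omega : ¬ 3*q+1 = 3+3*(i+1))]
      ring)]
  rw [if_neg (by omega : ¬ 3*q+1 = 1), if_neg (by omega : ¬ 3*q+1 = 3),
    if_neg (by omega : ¬ 3*q+1 = 3*(q-1+1)-1), if_pos (by omega : 3*q+1 = 1+3*(q-1+1)),
    if_neg (by omega : ¬ 3*q+1 = 2+3*(q-1+1)), if_neg (by omega : ¬ 3*q+1 = 3+3*(q-1+1))]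
  ring

lemma S_mulVec_D (n q : ℕ) (hq1 : 1 ≤ q) (hqn : q ≤ n) (v : Fin (6*n) → ℝ)
    (hm : 3*q+2 < 3*n+3) :
    (Smat n).mulVec v ⟨3*q+2, hm⟩ =
      pad (6*n) v (6*(q-1)+3) - pad (6*n) v (6*(q-1)+4) - pad (6*n) v (6*(q-1)+5) := by
  rw [S_mulVec]
  have hval : ((⟨3*q+2, hm⟩ : Fin (3*n+3)) : ℕ) = 3*q+2 := rfl
  simp only [hval]
  rw [Finset.sum_eq_single_of_mem (q-1) (Finset.mem_range.mpr (by omega))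
    (fun i hi hne => by
      have hi' : i < n := Finset.mem_range.mp hi
      rw [if_neg (by omega : ¬ 3*q+2+1 = 1), if_neg (by omega : ¬ 3*q+2+1 = 3),
        if_neg (by omega : ¬ 3*q+2+1 = 3*(i+1)-1), if_neg (by omega : ¬ 3*q+2+1 = 1+3*(i+1)),
        if_neg (by omega : ¬ 3*q+2+1 = 2+3*(i+1)), if_neg (by omega : ¬ 3*q+2+1 = 3+3*(i+1))]
      ring)]
  rw [if_neg (by omega : ¬ 3*q+2+1 = 1), if_neg (by omega : ¬ 3*q+2+1 = 3),
    if_neg (by omega : ¬ 3*q+2+1 = 3*(q-1+1)-1), if_neg (by omega : ¬ 3*q+2+1 = 1+3*(q-1+1)),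
    if_neg (by omega : ¬ 3*q+2+1 = 2+3*(q-1+1)), if_pos (by omega : 3*q+2+1 = 3+3*(q-1+1))]
  ring

lemma S_mulVec_Sn (n : ℕ) (hn : 1 ≤ n) (v : Fin (6*n) → ℝ) (hm : 3*n+1 < 3*n+3) :
    (Smat n).mulVec v ⟨3*n+1, hm⟩ =
      pad (6*n) v (6*(n-1)+2) - pad (6*n) v (6*(n-1)+3) + pad (6*n) v (6*(n-1)+4) := by
  rw [S_mulVec]
  have hval : ((⟨3*n+1, hm⟩ : Fin (3*n+3)) : ℕ) = 3*n+1 := rfl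
  simp only [hval]
  rw [Finset.sum_eq_single_of_mem (n-1) (Finset.mem_range.mpr (by omega))
    (fun i hi hne => by
      have hi' : i < n := Finset.mem_range.mp hi
      rw [if_neg (by omega : ¬ 3*n+1+1 = 1), if_neg (by omega : ¬ 3*n+1+1 = 3),
        if_neg (by omega : ¬ 3*n+1+1 = 3*(i+1)-1), if_neg (by omega : ¬ 3*n+1+1 = 1+3*(i+1)),
        if_neg (by omega : ¬ 3*n+1+1 = 2+3*(i+1)), if_neg (by omega : ¬ 3*n+1+1 = 3+3*(i+1))]
      ring)]
  rw [if_neg (by omega : ¬ 3*n+1+1 = 1), if_neg (by omega : ¬ 3*n+1+1 = 3),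
    if_neg (by omega : ¬ 3*n+1+1 = 3*(n-1+1)-1), if_neg (by omega : ¬ 3*n+1+1 = 1+3*(n-1+1)),
    if_pos (by omega : 3*n+1+1 = 2+3*(n-1+1)), if_neg (by omega : ¬ 3*n+1+1 = 3+3*(n-1+1))]
  ring

lemma S_mulVec_Smid (n q : ℕ) (hq1 : 1 ≤ q) (hqn : q < n) (v : Fin (6*n) → ℝ)
    (hm : 3*q+1 < 3*n+3) :
    (Smat n).mulVec v ⟨3*q+1, hm⟩ =
      (pad (6*n) v (6*(q-1)+2) - pad (6*n) v (6*(q-1)+3) + pad (6*n) v (6*(q-1)+4))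
      + (-(pad (6*n) v (6*q)) + pad (6*n) v (6*q+1) + pad (6*n) v (6*q+5)) := by
  rw [S_mulVec]
  have hval : ((⟨3*q+1, hm⟩ : Fin (3*n+3)) : ℕ) = 3*q+1 := rfl
  simp only [hval]
  have split : ∀ i ∈ range n,
      ( (if 3*q+1+1 = 1 then (1:ℝ) else 0) *
          (-(pad (6*n) v (6*i)) + pad (6*n) v (6*i+1) + pad (6*n) v (6*i+2))
      + (if 3*q+1+1 = 3 then 1 else 0) *
          (-(pad (6*n) v (6*i+3)) + pad (6*n) v (6*i+4) + pad (6*n) v (6*i+5))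
      + (if 3*q+1+1 = 3*(i+1)-1 then 1 else 0) *
          (-(pad (6*n) v (6*i)) + pad (6*n) v (6*i+1) + pad (6*n) v (6*i+5))
      + (if 3*q+1+1 = 1+3*(i+1) then 1 else 0) *
          (pad (6*n) v (6*i) - pad (6*n) v (6*i+1) - pad (6*n) v (6*i+2))
      + (if 3*q+1+1 = 2+3*(i+1) then 1 else 0) *
          (pad (6*n) v (6*i+2) - pad (6*n) v (6*i+3) + pad (6*n) v (6*i+4))
      + (if 3*q+1+1 = 3+3*(i+1) then 1 else 0) *
          (pad (6*n) v (6*i+3) - pad (6*n) v (6*i+4) - pad (6*n) v (6*i+5)) )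
      = (if 3*q+1+1 = 2+3*(i+1) then 1 else 0) *
          (pad (6*n) v (6*i+2) - pad (6*n) v (6*i+3) + pad (6*n) v (6*i+4))
      + (if 3*q+1+1 = 3*(i+1)-1 then 1 else 0) *
          (-(pad (6*n) v (6*i)) + pad (6*n) v (6*i+1) + pad (6*n) v (6*i+5)) := by
    intro i hi
    have hi' : i < n := Finset.mem_range.mp hi
    rw [if_neg (by omega : ¬ 3*q+1+1 = 1), if_neg (by omega : ¬ 3*q+1+1 = 3),
      if_neg (by omega : ¬ 3*q+1+1 = 1+3*(i+1)), if_neg (by omega : ¬ 3*q+1+1 = 3+3*(i+1))]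
    ring
  rw [Finset.sum_congr rfl split, Finset.sum_add_distrib]
  congr 1
  · rw [Finset.sum_eq_single_of_mem (q-1) (Finset.mem_range.mpr (by omega))
      (fun i hi hne => by
        have hi' : i < n := Finset.mem_range.mp hi
        rw [if_neg (by omega : ¬ 3*q+1+1 = 2+3*(i+1))]; ring)]
    rw [if_pos (by omega : 3*q+1+1 = 2+3*(q-1+1))]
    ring
  · rw [Finset.sum_eq_single_of_mem q (Finset.mem_range.mpr (by omega))
      (fun i hi hne => by
        have hi' : i < n := Finset.mem_range.mp hi
        rw [if_neg (by omega : ¬ 3*q+1+1 = 3*(i+1)-1)]; ring)]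
    rw [if_pos (by omega : 3*q+1+1 = 3*(q+1)-1)]
    ring

end Aux4
end Phos
namespace Phos
open Finset
section Aux5

lemma Z_mulVec_0 (n : ℕ) (x : Fin (3*n+3) → ℝ) (h0 : (0:ℕ) < 3) :
    (Zmat n).mulVec x ⟨0, h0⟩ = ∑ q ∈ range (n+1), pad (3*n+3) x (3*q) := by
  have hrw : (Zmat n).mulVec x ⟨0, h0⟩ = ∑ j ∈ range (3*n+3),
      (if hj : j < 3*n+3 then Zmat n ⟨0, h0⟩ ⟨j, hj⟩ * x ⟨j, hj⟩ else 0) := by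
    rw [Matrix.mulVec, dotProduct, fin_sum_eq (3*n+3) (fun j => Zmat n ⟨0, h0⟩ j * x j)]
  have zval : ∀ (j : ℕ) (hj : j < 3*n+3),
      Zmat n ⟨0, h0⟩ ⟨j, hj⟩ = (if j % 3 = 0 then 1 else 0) := by
    intro j hj; simp [Zmat]
  rw [hrw]
  refine Eq.trans (sum_range_three (n+1) _) (Finset.sum_congr rfl fun q hq => ?_)
  have hq' : q < n+1 := Finset.mem_range.mp hq
  have c0 : 3*q < 3*n+3 := by omega
  have c1 : 3*q+1 < 3*n+3 := by omega
  have c2 : 3*q+2 < 3*n+3 := by omega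
  rw [dif_pos c0, dif_pos c1, dif_pos c2, zval _ c0, zval _ c1, zval _ c2,
    if_pos (by omega : (3*q) % 3 = 0), if_neg (by omega : ¬ (3*q+1) % 3 = 0),
    if_neg (by omega : ¬ (3*q+2) % 3 = 0), pad_lt _ x (3*q) c0]
  ring

lemma Z_mulVec_2 (n : ℕ) (x : Fin (3*n+3) → ℝ) (h2 : (2:ℕ) < 3) :
    (Zmat n).mulVec x ⟨2, h2⟩ = ∑ q ∈ range (n+1), pad (3*n+3) x (3*q+2) := by
  have hrw : (Zmat n).mulVec x ⟨2, h2⟩ = ∑ j ∈ range (3*n+3),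
      (if hj : j < 3*n+3 then Zmat n ⟨2, h2⟩ ⟨j, hj⟩ * x ⟨j, hj⟩ else 0) := by
    rw [Matrix.mulVec, dotProduct, fin_sum_eq (3*n+3) (fun j => Zmat n ⟨2, h2⟩ j * x j)]
  have zval : ∀ (j : ℕ) (hj : j < 3*n+3),
      Zmat n ⟨2, h2⟩ ⟨j, hj⟩ = (if j % 3 = 2 then 1 else 0) := by
    intro j hj; simp [Zmat]
  rw [hrw]
  refine Eq.trans (sum_range_three (n+1) _) (Finset.sum_congr rfl fun q hq => ?_)
  have hq' : q < n+1 := Finset.mem_range.mp hq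
  have c0 : 3*q < 3*n+3 := by omega
  have c1 : 3*q+1 < 3*n+3 := by omega
  have c2 : 3*q+2 < 3*n+3 := by omega
  rw [dif_pos c0, dif_pos c1, dif_pos c2, zval _ c0, zval _ c1, zval _ c2,
    if_neg (by omega : ¬ (3*q) % 3 = 2), if_neg (by omega : ¬ (3*q+1) % 3 = 2),
    if_pos (by omega : (3*q+2) % 3 = 2), pad_lt _ x (3*q+2) c2]
  ring

lemma Z_mulVec_1 (n : ℕ) (x : Fin (3*n+3) → ℝ) (h1 : (1:ℕ) < 3) :
    (Zmat n).mulVec x ⟨1, h1⟩ =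
      -(pad (3*n+3) x 0) - pad (3*n+3) x 2 + ∑ q ∈ range (n+1), pad (3*n+3) x (3*q+1) := by
  have hrw : (Zmat n).mulVec x ⟨1, h1⟩ = ∑ j ∈ range (3*n+3),
      (if hj : j < 3*n+3 then Zmat n ⟨1, h1⟩ ⟨j, hj⟩ * x ⟨j, hj⟩ else 0) := by
    rw [Matrix.mulVec, dotProduct, fin_sum_eq (3*n+3) (fun j => Zmat n ⟨1, h1⟩ j * x j)]
  have zval : ∀ (j : ℕ) (hj : j < 3*n+3), Zmat n ⟨1, h1⟩ ⟨j, hj⟩ =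
      (if j % 3 = 1 then 1 else if j = 0 ∨ j = 2 then -1 else 0) := by
    intro j hj; simp [Zmat]
  rw [hrw]
  refine Eq.trans (sum_range_three (n+1) _) ?_
  have step : ∀ q ∈ range (n+1),
      ((if hj : 3*q < 3*n+3 then Zmat n ⟨1, h1⟩ ⟨3*q, hj⟩ * x ⟨3*q, hj⟩ else 0)
      + (if hj : 3*q+1 < 3*n+3 then Zmat n ⟨1, h1⟩ ⟨3*q+1, hj⟩ * x ⟨3*q+1, hj⟩ else 0)
      + (if hj : 3*q+2 < 3*n+3 then Zmat n ⟨1, h1⟩ ⟨3*q+2, hj⟩ * x ⟨3*q+2, hj⟩ else 0))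
      = pad (3*n+3) x (3*q+1)
        + (if q = 0 then -(pad (3*n+3) x 0) - pad (3*n+3) x 2 else 0) := by
    intro q hq
    have hq' : q < n+1 := Finset.mem_range.mp hq
    have c0 : 3*q < 3*n+3 := by omega
    have c1 : 3*q+1 < 3*n+3 := by omega
    have c2 : 3*q+2 < 3*n+3 := by omega
    rw [dif_pos c0, dif_pos c1, dif_pos c2, zval _ c0, zval _ c1, zval _ c2]
    rw [if_neg (by omega : ¬ (3*q) % 3 = 1), if_pos (by omega : (3*q+1) % 3 = 1),
      if_neg (by omega : ¬ (3*q+2) % 3 = 1)]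
    rcases Nat.eq_zero_or_pos q with hq0 | hq0
    · subst hq0
      rw [if_pos (by omega : (3*0 : ℕ) = 0 ∨ (3*0 : ℕ) = 2),
        if_pos (by omega : (3*0+2 : ℕ) = 0 ∨ (3*0+2 : ℕ) = 2), if_pos rfl,
        pad_lt _ x (3*0+1) c1, pad_lt _ x 0 (by omega), pad_lt _ x 2 (by omega)]
      have e1 : (⟨3*0, c0⟩ : Fin (3*n+3)) = ⟨0, by omega⟩ := rfl
      have e2 : (⟨3*0+2, c2⟩ : Fin (3*n+3)) = ⟨2, by omega⟩ := rfl
      rw [e1, e2]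
      ring
    · rw [if_neg (by omega : ¬ ((3*q : ℕ) = 0 ∨ (3*q : ℕ) = 2)),
        if_neg (by omega : ¬ ((3*q+2 : ℕ) = 0 ∨ (3*q+2 : ℕ) = 2)),
        if_neg (by omega : ¬ q = 0), pad_lt _ x (3*q+1) c1]
      ring
  rw [Finset.sum_congr rfl step, Finset.sum_add_distrib, Finset.sum_ite_eq'
    (range (n+1)) 0 (fun _ => -(pad (3*n+3) x 0) - pad (3*n+3) x 2)]
  rw [if_pos (Finset.mem_range.mpr (by omega))]
  ring

end Aux5
end Phos
namespace Phos
open Finset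
section Aux6
variable (n : ℕ) (g : Fin 3 → ℝ)

lemma gL_eval (j : ℕ) (hj : j < 3*n+3) :
    gL n g ⟨j, hj⟩ = g 0 ^ (Lmat n ⟨j, hj⟩ 0) * g 1 ^ (Lmat n ⟨j, hj⟩ 1)
      * g 2 ^ (Lmat n ⟨j, hj⟩ 2) := by
  show (∏ c, g c ^ (Lmat n ⟨j, hj⟩ c)) = _
  rw [Fin.prod_univ_three]

lemma gL_0 (hj : (0:ℕ) < 3*n+3) :
    gL n g ⟨0, hj⟩ = g 0 ^ (1:ℤ) * g 1 ^ ((n:ℤ)-1) * g 2 ^ (-1:ℤ) := by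
  rw [gL_eval]
  have lrow : ∀ c, Lmat n ⟨0, hj⟩ c = ![1, (n:ℤ)-1, -1] c := by
    intro c
    simp [Lmat]
  rw [lrow 0, lrow 1, lrow 2]
  norm_num [Matrix.cons_val_two, Matrix.tail_cons, Matrix.head_cons]

lemma gL_1 (hj : (1:ℕ) < 3*n+3) :
    gL n g ⟨1, hj⟩ = g 0 ^ (-1:ℤ) * g 1 ^ (-(n:ℤ)) := by
  rw [gL_eval]
  have lrow : ∀ c, Lmat n ⟨1, hj⟩ c = ![-1, -(n:ℤ), 0] c := by
    intro c
    simp [Lmat]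
  rw [lrow 0, lrow 1, lrow 2]
  norm_num [Matrix.cons_val_two, Matrix.tail_cons, Matrix.head_cons]

lemma gL_2 (hj : (2:ℕ) < 3*n+3) :
    gL n g ⟨2, hj⟩ = g 0 ^ (1:ℤ) * g 1 ^ ((n:ℤ)-2) * g 2 ^ (-1:ℤ) := by
  rw [gL_eval]
  have lrow : ∀ c, Lmat n ⟨2, hj⟩ c = ![1, (n:ℤ)-2, -1] c := by
    intro c
    simp [Lmat]
  rw [lrow 0, lrow 1, lrow 2]
  norm_num [Matrix.cons_val_two, Matrix.tail_cons, Matrix.head_cons]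

lemma gL_3q (q : ℕ) (hq1 : 1 ≤ q) (hj : 3*q < 3*n+3) :
    gL n g ⟨3*q, hj⟩ = g 1 ^ ((q:ℤ)-2) * g 2 ^ (-1:ℤ) := by
  rw [gL_eval]
  have hval : ((⟨3*q, hj⟩ : Fin (3*n+3)) : ℕ) = 3*q := rfl
  have lrow : ∀ c, Lmat n ⟨3*q, hj⟩ c = ![0, (q:ℤ)-2, -1] c := by
    intro c
    simp only [Lmat, Matrix.of_apply, hval]
    rw [if_neg (by omega : ¬ 3*q = 0), if_neg (by omega : ¬ 3*q = 1),
      if_neg (by omega : ¬ 3*q = 2), if_neg (by omega : ¬ (3*q) % 3 = 1),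
      show (3*q)/3 = q by omega]
  rw [lrow 0, lrow 1, lrow 2]
  norm_num [Matrix.cons_val_two, Matrix.tail_cons, Matrix.head_cons]

lemma gL_3q1 (q : ℕ) (hq1 : 1 ≤ q) (hj : 3*q+1 < 3*n+3) :
    gL n g ⟨3*q+1, hj⟩ = g 0 ^ (-1:ℤ) * g 1 ^ ((q:ℤ)-(n:ℤ)) := by
  rw [gL_eval]
  have hval : ((⟨3*q+1, hj⟩ : Fin (3*n+3)) : ℕ) = 3*q+1 := rfl
  have lrow : ∀ c, Lmat n ⟨3*q+1, hj⟩ c = ![-1, (q:ℤ)-(n:ℤ), 0] c := by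
    intro c
    simp only [Lmat, Matrix.of_apply, hval]
    rw [if_neg (by omega : ¬ 3*q+1 = 0), if_neg (by omega : ¬ 3*q+1 = 1),
      if_neg (by omega : ¬ 3*q+1 = 2), if_pos (by omega : (3*q+1) % 3 = 1),
      show (3*q+1)/3 = q by omega]
  rw [lrow 0, lrow 1, lrow 2]
  norm_num [Matrix.cons_val_two, Matrix.tail_cons, Matrix.head_cons]

lemma gL_3q2 (q : ℕ) (hq1 : 1 ≤ q) (hj : 3*q+2 < 3*n+3) :
    gL n g ⟨3*q+2, hj⟩ = g 1 ^ ((q:ℤ)-2) * g 2 ^ (-1:ℤ) := by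
  rw [gL_eval]
  have hval : ((⟨3*q+2, hj⟩ : Fin (3*n+3)) : ℕ) = 3*q+2 := rfl
  have lrow : ∀ c, Lmat n ⟨3*q+2, hj⟩ c = ![0, (q:ℤ)-2, -1] c := by
    intro c
    simp only [Lmat, Matrix.of_apply, hval]
    rw [if_neg (by omega : ¬ 3*q+2 = 0), if_neg (by omega : ¬ 3*q+2 = 1),
      if_neg (by omega : ¬ 3*q+2 = 2), if_neg (by omega : ¬ (3*q+2) % 3 = 1),
      show (3*q+2)/3 = q by omega]
  rw [lrow 0, lrow 1, lrow 2]
  norm_num [Matrix.cons_val_two, Matrix.tail_cons, Matrix.head_cons]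

end Aux6
end Phos
namespace Phos
open Finset Polynomial
section Parts
variable {n : ℕ} {α : ℝ}

lemma av_const (n : ℕ) (α : ℝ) (j : ℕ) (h : j - 1 < 3*n+3) : av n (fun _ => α) j = α :=
  dif_pos h

lemma om1_const (n : ℕ) (α : ℝ) : om1 n (fun _ => α) = ((n:ℝ)+1) * α := by
  rw [om1, Finset.sum_congr rfl (fun k hk => av_const n α (1+3*k)
    (by have := Finset.mem_range.mp hk; omega)), Finset.sum_const, Finset.card_range,
    nsmul_eq_mul]
  push_cast; ring

lemma om3_const (n : ℕ) (α : ℝ) : om3 n (fun _ => α) = ((n:ℝ)+1) * α := by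
  rw [om3, Finset.sum_congr rfl (fun k hk => av_const n α (3+3*k)
    (by have := Finset.mem_range.mp hk; omega)), Finset.sum_const, Finset.card_range,
    nsmul_eq_mul]
  push_cast; ring

lemma om2_const (n : ℕ) (α : ℝ) : om2 n (fun _ => α) = ((n:ℝ)-1) * α := by
  rw [om2, Finset.sum_congr rfl (fun k hk => av_const n α (2+3*k)
    (by have := Finset.mem_range.mp hk; omega)), Finset.sum_const, Finset.card_range,
    nsmul_eq_mul, av_const n α 1 (by omega), av_const n α 3 (by omega)]
  push_cast; ring

lemma Om2_const (n : ℕ) (α : ℝ) (ξ : ℝ) :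
    Om2 n (fun _ => α) ξ = α * ∑ k ∈ range (n+1), ξ^k := by
  rw [Om2, Finset.mul_sum]
  refine Finset.sum_congr rfl fun k hk => ?_
  rw [av_const n α (2+3*k) (by have := Finset.mem_range.mp hk; omega)]

lemma Om4_const (n : ℕ) (α : ℝ) (ξ : ℝ) :
    Om4 n (fun _ => α) ξ = α * ∑ k ∈ range n, ξ^k := by
  rw [Om4, ← Finset.Ico_add_one_right_eq_Icc, Finset.sum_Ico_eq_sum_range, Finset.mul_sum]
  simp only [Nat.add_sub_cancel]
  refine Finset.sum_congr rfl fun k hk => ?_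
  rw [av_const n α (1+3*(1+k)) (by have := Finset.mem_range.mp hk; omega)]
  norm_num

lemma Om6_const (n : ℕ) (α : ℝ) (ξ : ℝ) :
    Om6 n (fun _ => α) ξ = α * ∑ k ∈ range n, ξ^k := by
  rw [Om6, ← Finset.Ico_add_one_right_eq_Icc, Finset.sum_Ico_eq_sum_range, Finset.mul_sum]
  simp only [Nat.add_sub_cancel]
  refine Finset.sum_congr rfl fun k hk => ?_
  rw [av_const n α (3+3*(1+k)) (by have := Finset.mem_range.mp hk; omega)]
  norm_num

lemma F1_const (n : ℕ) (α : ℝ) (ξ : ℝ) : F1 n (fun _ => α) ξ = 0 := by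
  rw [F1, Om4_const, Om6_const, om1_const, om3_const]
  ring

lemma Pp_const (n : ℕ) (α : ℝ) (hα : 0 < α) (ξ : ℝ) :
    Pp n (fun _ => α) ξ = 2 * α^2 / ((n:ℝ)+1)^2 * (ξ^n - 1) * (ξ^(n+1) - 1) := by
  have hα' : α ≠ 0 := ne_of_gt hα
  have hn1 : ((n:ℝ)+1) ≠ 0 := by positivity
  have hG := geom_sum_mul ξ n
  have hH := geom_sum_mul ξ (n+1)
  rw [Pp, F1_const, Ap, Dlt, Om4_const, Om6_const, Om2_const, om1_const, om3_const,
    av_const n α 1 (by omega), av_const n α 3 (by omega), ← hG, ← hH]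
  field_simp
  ring

lemma Pp_root_iff (n : ℕ) (hn : 2 ≤ n) (α : ℝ) (hα : 0 < α) (ξ : ℝ) (hξ : 0 < ξ) :
    Pp n (fun _ => α) ξ = 0 ↔ ξ = 1 := by
  rw [Pp_const n α hα ξ]
  constructor
  · intro h
    have hc : 2 * α^2 / ((n:ℝ)+1)^2 ≠ 0 := by positivity
    have h' : (ξ^n - 1) * (ξ^(n+1) - 1) = 0 := by
      rcases mul_eq_zero.mp h with h | h
      · rcases mul_eq_zero.mp h with h | h
        · exact absurd h hc
        · rw [h]; ring
      · rw [h]; ring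
    have hpow : ξ^n = 1 ∨ ξ^(n+1) = 1 := by
      rcases mul_eq_zero.mp h' with h | h
      · left; linarith
      · right; linarith
    by_contra hne
    rcases lt_or_gt_of_ne hne with hl | hg
    · have k1 : ξ^n < 1 := pow_lt_one₀ (le_of_lt hξ) hl (by omega)
      have k2 : ξ^(n+1) < 1 := pow_lt_one₀ (le_of_lt hξ) hl (by omega)
      rcases hpow with h | h <;> linarith
    · have k1 : 1 < ξ^n := one_lt_pow₀ hg (by omega)
      have k2 : 1 < ξ^(n+1) := one_lt_pow₀ hg (by omega)
      rcases hpow with h | h <;> linarith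
  · intro h
    rw [h]
    ring

lemma geom_ne_root_one (m : ℕ) (hm : 1 ≤ m) :
    Polynomial.rootMultiplicity (1:ℝ) (∑ i ∈ range m, (X:ℝ[X])^i) = 0 := by
  apply Polynomial.rootMultiplicity_eq_zero
  simp only [Polynomial.IsRoot, Polynomial.eval_finset_sum, Polynomial.eval_pow,
    Polynomial.eval_X, one_pow, Finset.sum_const, Finset.card_range, nsmul_eq_mul, mul_one]
  exact_mod_cast (by omega : ¬ (m:ℕ) = 0) ∘ (by exact_mod_cast ·)

lemma rm_pow_sub_one (m : ℕ) (hm : 1 ≤ m) :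
    Polynomial.rootMultiplicity (1:ℝ) ((X:ℝ[X])^m - 1) = 1 := by
  have hfac : ((X:ℝ[X])^m - 1) = (∑ i ∈ range m, (X:ℝ[X])^i) * (X - 1) :=
    (geom_sum_mul (X:ℝ[X]) m).symm
  have hne : ((X:ℝ[X])^m - 1) ≠ 0 := fun h => by
    have := congrArg (Polynomial.eval 0) h
    simp [zero_pow (by omega : m ≠ 0)] at this
  rw [hfac, Polynomial.rootMultiplicity_mul (hfac ▸ hne), geom_ne_root_one m hm]
  have : ((X:ℝ[X]) - 1) = X - Polynomial.C 1 := by rw [Polynomial.C_1]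
  rw [this, Polynomial.rootMultiplicity_X_sub_C_self]

end Parts
end Phos
namespace Phos
open Finset Polynomial
section Part4

lemma Xpow_sub_one_ne (m : ℕ) (hm : 1 ≤ m) : ((X:ℝ[X])^m - 1) ≠ 0 := fun h => by
  have := congrArg (Polynomial.eval 0) h
  simp [zero_pow (by omega : m ≠ 0)] at this

lemma exists_poly (n : ℕ) (hn : 2 ≤ n) (α : ℝ) (hα : 0 < α) :
    ∃ p : Polynomial ℝ, (∀ ξ : ℝ, Pp n (fun _ => α) ξ = p.eval ξ) ∧
      p.rootMultiplicity 1 = 2 := by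
  have hc : (2*α^2/((n:ℝ)+1)^2) ≠ 0 := by positivity
  refine ⟨Polynomial.C (2*α^2/((n:ℝ)+1)^2) * (((X:ℝ[X])^n - 1) * ((X:ℝ[X])^(n+1) - 1)),
    fun ξ => ?_, ?_⟩
  · rw [Pp_const n α hα ξ]
    simp only [Polynomial.eval_mul, Polynomial.eval_C, Polynomial.eval_sub,
      Polynomial.eval_pow, Polynomial.eval_X, Polynomial.eval_one]
    ring
  · have h1 : ((X:ℝ[X])^n - 1) ≠ 0 := Xpow_sub_one_ne n (by omega)
    have h2 : ((X:ℝ[X])^(n+1) - 1) ≠ 0 := Xpow_sub_one_ne (n+1) (by omega)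
    have hCne : (Polynomial.C (2*α^2/((n:ℝ)+1)^2)) ≠ 0 := by
      simpa using hc
    rw [Polynomial.rootMultiplicity_mul (mul_ne_zero hCne (mul_ne_zero h1 h2)),
      Polynomial.rootMultiplicity_mul (mul_ne_zero h1 h2),
      rm_pow_sub_one n (by omega), rm_pow_sub_one (n+1) (by omega),
      Polynomial.rootMultiplicity_eq_zero (by simp [Polynomial.IsRoot, hc])]

end Part4
end Phos
namespace Phos
open Finset
section Part5

lemma theta_iff (n : ℕ) (hn : 2 ≤ n) (α : ℝ) (hα : 0 < α)
    (g : Fin 3 → ℝ) (hg : ∀ i, 0 < g i) :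
    Theta n g (fun _ => α) = 0 ↔ g = fun _ => 1 := by
  constructor
  · intro hT
    set X : Fin (3*n+3) → ℝ := fun j => (fun _ => α) j * (gL n g j - 1) with hX
    have hg0 := hg 0
    have hg1 := hg 1
    have hg2 := hg 2
    have hg0' : g 0 ≠ 0 := ne_of_gt hg0
    have hg1' : g 1 ≠ 0 := ne_of_gt hg1
    have hg2' : g 2 ≠ 0 := ne_of_gt hg2
    have hα' : α ≠ 0 := ne_of_gt hα
    -- component 0
    have h0 : ∑ q ∈ range (n+1), pad (3*n+3) X (3*q) = 0 := by
      rw [← Z_mulVec_0 n X (by omega)]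
      exact congrFun hT ⟨0, by omega⟩
    have h2 : ∑ q ∈ range (n+1), pad (3*n+3) X (3*q+2) = 0 := by
      rw [← Z_mulVec_2 n X (by omega)]
      exact congrFun hT ⟨2, by omega⟩
    have h1 : -(pad (3*n+3) X 0) - pad (3*n+3) X 2
        + ∑ q ∈ range (n+1), pad (3*n+3) X (3*q+1) = 0 := by
      rw [← Z_mulVec_1 n X (by omega)]
      exact congrFun hT ⟨1, by omega⟩
    -- rewrite sums, splitting off q = 0
    rw [Finset.sum_range_succ'] at h0 h2 h1
    -- identify the tails of h0 and h2
    have tail0 : ∀ q ∈ range n, pad (3*n+3) X (3*(q+1)) =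
        α * (g 1 ^ ((q:ℤ)+1-2) * g 2 ^ (-1:ℤ) - 1) := by
      intro q hq
      have hq' : q < n := Finset.mem_range.mp hq
      rw [pad_lt _ X (3*(q+1)) (by omega), hX]
      simp only
      rw [gL_3q n g (q+1) (by omega) (by omega)]
      push_cast
      ring
    have tail2 : ∀ q ∈ range n, pad (3*n+3) X (3*(q+1)+2) =
        α * (g 1 ^ ((q:ℤ)+1-2) * g 2 ^ (-1:ℤ) - 1) := by
      intro q hq
      have hq' : q < n := Finset.mem_range.mp hq
      rw [pad_lt _ X (3*(q+1)+2) (by omega), hX]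
      simp only
      rw [gL_3q2 n g (q+1) (by omega) (by omega)]
      push_cast
      ring
    rw [Finset.sum_congr rfl tail0] at h0
    rw [Finset.sum_congr rfl tail2] at h2
    -- head terms
    have head0 : pad (3*n+3) X (3*0) = α * (g 0 * g 1 ^ ((n:ℤ)-1) * g 2 ^ (-1:ℤ) - 1) := by
      rw [pad_lt _ X (3*0) (by omega), hX]
      simp only
      rw [show (⟨3*0, by omega⟩ : Fin (3*n+3)) = ⟨0, by omega⟩ from rfl, gL_0 n g (by omega)]
      rw [zpow_one]
    have head2 : pad (3*n+3) X (3*0+2) = α * (g 0 * g 1 ^ ((n:ℤ)-2) * g 2 ^ (-1:ℤ) - 1) := by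
      rw [pad_lt _ X (3*0+2) (by omega), hX]
      simp only
      rw [show (⟨3*0+2, by omega⟩ : Fin (3*n+3)) = ⟨2, by omega⟩ from rfl, gL_2 n g (by omega)]
      rw [zpow_one]
    rw [head0] at h0
    rw [head2] at h2
    -- g 1 = 1
    have hkey : g 0 * g 1 ^ ((n:ℤ)-1) * g 2 ^ (-1:ℤ) = g 0 * g 1 ^ ((n:ℤ)-2) * g 2 ^ (-1:ℤ) := by
      have h' : α * (g 0 * g 1 ^ ((n:ℤ)-1) * g 2 ^ (-1:ℤ))
          = α * (g 0 * g 1 ^ ((n:ℤ)-2) * g 2 ^ (-1:ℤ)) := by linarith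
      exact mul_left_cancel₀ hα' h'
    have hpow : g 1 ^ ((n:ℤ)-1) = g 1 ^ ((n:ℤ)-2) := by
      have e1 : g 2 ^ (-1:ℤ) ≠ 0 := zpow_ne_zero _ hg2'
      exact mul_left_cancel₀ hg0' (mul_right_cancel₀ e1 hkey)
    have hg1eq : g 1 = 1 := by
      have e2 : g 1 ^ ((n:ℤ)-2) ≠ 0 := zpow_ne_zero _ hg1'
      refine mul_left_cancel₀ e2 ?_
      calc g 1 ^ ((n:ℤ)-2) * g 1 = g 1 ^ ((n:ℤ)-1) := by
            rw [← zpow_add_one₀ hg1']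
            congr 1
            ring
        _ = g 1 ^ ((n:ℤ)-2) * 1 := by rw [mul_one]; exact hpow
    -- rewrite h1 in explicit form
    have head0' : pad (3*n+3) X 0 = α * (g 0 * g 1 ^ ((n:ℤ)-1) * g 2 ^ (-1:ℤ) - 1) := head0
    have head2' : pad (3*n+3) X 2 = α * (g 0 * g 1 ^ ((n:ℤ)-2) * g 2 ^ (-1:ℤ) - 1) := head2
    have tail1 : ∀ q ∈ range n, pad (3*n+3) X (3*(q+1)+1) =
        α * (g 0 ^ (-1:ℤ) * g 1 ^ (((q:ℤ)+1)-(n:ℤ)) - 1) := by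
      intro q hq
      have hq' : q < n := Finset.mem_range.mp hq
      rw [pad_lt _ X (3*(q+1)+1) (by omega), hX]
      simp only
      rw [gL_3q1 n g (q+1) (by omega) (by omega)]
      push_cast
      ring
    have head1 : pad (3*n+3) X (3*0+1) = α * (g 0 ^ (-1:ℤ) * g 1 ^ (-(n:ℤ)) - 1) := by
      rw [pad_lt _ X (3*0+1) (by omega), hX]
      simp only
      rw [show (⟨3*0+1, by omega⟩ : Fin (3*n+3)) = ⟨1, by omega⟩ from rfl, gL_1 n g (by omega)]
    rw [Finset.sum_congr rfl tail1, head0', head2', head1] at h1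
    -- substitute g 1 = 1
    simp only [hg1eq, one_zpow, mul_one] at h0 h1
    rw [Finset.sum_const, Finset.card_range, nsmul_eq_mul] at h0 h1
    simp only [zpow_neg_one] at h0 h1
    -- now pure algebra
    have hA : α * ((g 0 + (n:ℝ)) - ((n:ℝ)+1) * (g 2)) = 0 := by
      have hw' : g 2 ≠ 0 := hg2'
      field_simp at h0
      linear_combination h0
    have hAs : g 0 + (n:ℝ) - ((n:ℝ)+1) * g 2 = 0 := by
      rcases mul_eq_zero.mp hA with h | h
      · exact absurd h hα'
      · exact h
    have hB' : α * (g 2) * (-2*(g 0)*(g 0 - g 2) + ((n:ℝ)+1)*(1 - g 0)*(g 2)) = 0 := by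
      field_simp at h1
      linear_combination (g 2) * h1
    have hBs : -2*(g 0)*(g 0 - g 2) + ((n:ℝ)+1)*(1 - g 0)*(g 2) = 0 := by
      rcases mul_eq_zero.mp hB' with h | h
      · rcases mul_eq_zero.mp h with h | h
        · exact absurd h hα'
        · exact absurd h hg2'
      · exact h
    have key : (1 - g 0) * (2*(n:ℝ)*(g 0) + ((n:ℝ)+1)^2 * (g 2)) = 0 := by
      linear_combination ((n:ℝ)+1)*hBs + 2*(g 0)*hAs
    have hu1 : g 0 = 1 := by
      rcases mul_eq_zero.mp key with h | h
      · linarith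
      · have : 0 < 2*(n:ℝ)*(g 0) + ((n:ℝ)+1)^2 * (g 2) := by positivity
        linarith
    have hw1 : g 2 = 1 := by
      have hne : (n:ℝ)+1 ≠ 0 := by positivity
      have : ((n:ℝ)+1) * g 2 = ((n:ℝ)+1) * 1 := by rw [mul_one]; linarith
      exact mul_left_cancel₀ hne this
    funext i
    fin_cases i
    · exact hu1
    · exact hg1eq
    · exact hw1
  · intro hg1
    subst hg1
    have : (fun j => (fun _ => α) j * (gL n (fun _ => (1:ℝ)) j - 1)) =
        (0 : Fin (3*n+3) → ℝ) := by
      funext j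
      simp [gL]
    rw [Theta, this, Matrix.mulVec_zero]

end Part5
end Phos
namespace Phos
open Finset
section Part6

lemma mul_cancel0 {a t : ℝ} (ha : a ≠ 0) (h : a * t = 0) : t = 0 := by
  rcases mul_eq_zero.mp h with h | h
  · exact absurd h ha
  · exact h

lemma Phi_pos (n : ℕ) (x : Fin (3*n+3) → ℝ) (hx : ∀ m, 0 < x m) (r : Fin (6*n)) :
    0 < Phi n x r :=
  Finset.prod_pos fun m _ => pow_pos (hx m) _

lemma isSteady_const (n : ℕ) (α : ℝ) (hα : 0 < α) (lam : Fin (3*n) → ℝ) :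
    isSteady n (kappaOf n (fun _ => α) lam) (fun _ => α) := by
  have hv : (fun r => kappaOf n (fun _ => α) lam r * Phi n (fun _ => α) r)
      = (Emat n).mulVec lam :=
    funext fun r => div_mul_cancel₀ _ (ne_of_gt (Phi_pos n _ (fun _ => hα) r))
  rw [isSteady, hv]
  funext m
  simp only [Pi.zero_apply]
  rw [S_mulVec]
  apply Finset.sum_eq_zero
  intro i hi
  have hi' : i < n := Finset.mem_range.mp hi
  have W : ∀ (s : ℕ) (hs : s < 6) (h : 6*i+s < 6*n),
      pad (6*n) ((Emat n).mulVec lam) (6*i+s) =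
      E0 ⟨s, hs⟩ ⟨0, by omega⟩ * pad (3*n) lam (3*i)
      + E0 ⟨s, hs⟩ ⟨1, by omega⟩ * pad (3*n) lam (3*i+1)
      + E0 ⟨s, hs⟩ ⟨2, by omega⟩ * pad (3*n) lam (3*i+2) := by
    intro s hs h
    rw [pad_lt _ _ _ h]
    exact E_mulVec n i s hs hi' lam h
  have W0 : pad (6*n) ((Emat n).mulVec lam) (6*i) =
      pad (3*n) lam (3*i) + pad (3*n) lam (3*i+2) := by
    have := W 0 (by omega) (by omega)
    rw [show (6*i : ℕ) = 6*i+0 by ring, this]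
    norm_num [E0]
  have W1 : pad (6*n) ((Emat n).mulVec lam) (6*i+1) = pad (3*n) lam (3*i) := by
    rw [W 1 (by omega) (by omega)]
    norm_num [E0]
  have W2 : pad (6*n) ((Emat n).mulVec lam) (6*i+2) = pad (3*n) lam (3*i+2) := by
    rw [W 2 (by omega) (by omega)]
    norm_num [E0]
  have W3 : pad (6*n) ((Emat n).mulVec lam) (6*i+3) =
      pad (3*n) lam (3*i+1) + pad (3*n) lam (3*i+2) := by
    rw [W 3 (by omega) (by omega)]
    norm_num [E0]
  have W4 : pad (6*n) ((Emat n).mulVec lam) (6*i+4) = pad (3*n) lam (3*i+1) := by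
    rw [W 4 (by omega) (by omega)]
    norm_num [E0]
  have W5 : pad (6*n) ((Emat n).mulVec lam) (6*i+5) = pad (3*n) lam (3*i+2) := by
    rw [W 5 (by omega) (by omega)]
    norm_num [E0]
  rw [W0, W1, W2, W3, W4, W5]
  ring

end Part6
end Phos
namespace Phos
open Finset
section Part7

lemma steady_unique (n : ℕ) (hn : 2 ≤ n) (α : ℝ) (hα : 0 < α) (lam : Fin (3*n) → ℝ)
    (hlam : ∀ c, 0 < lam c) (b : Fin (3*n+3) → ℝ) (hb : ∀ j, 0 < b j)
    (hst : isSteady n (kappaOf n (fun _ => α) lam) b)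
    (hcons : (Zmat n).mulVec b = (Zmat n).mulVec (fun _ => α)) :
    b = fun _ => α := by
  have hα' : α ≠ 0 := ne_of_gt hα
  set v : Fin (6*n) → ℝ := fun r => kappaOf n (fun _ => α) lam r * Phi n b r with hv
  set Pb : ℕ → ℝ := pad (3*n+3) b with hPbdef
  set Pl : ℕ → ℝ := pad (3*n) lam with hPldef
  have hPb : ∀ j, j < 3*n+3 → 0 < Pb j := by
    intro j hj
    rw [hPbdef, pad_lt _ b j hj]
    exact hb _
  have hPl : ∀ c, c < 3*n → 0 < Pl c := by
    intro c hc
    rw [hPldef, pad_lt _ lam c hc]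
    exact hlam _
  have hPa : ∀ j, j < 3*n+3 → pad (3*n+3) (fun _ => α) j = α := by
    intro j hj
    rw [pad_lt _ _ j hj]
  -- value of v on block i
  have hval : ∀ i, i < n →
      pad (6*n) v (6*i) = (Pl (3*i) + Pl (3*i+2))/(α*α) * (Pb 0 * Pb (3*i+1)) ∧
      pad (6*n) v (6*i+1) = Pl (3*i)/α * Pb (3*i+3) ∧
      pad (6*n) v (6*i+2) = Pl (3*i+2)/α * Pb (3*i+3) ∧
      pad (6*n) v (6*i+3) = (Pl (3*i+1) + Pl (3*i+2))/(α*α) * (Pb 2 * Pb (3*i+4)) ∧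
      pad (6*n) v (6*i+4) = Pl (3*i+1)/α * Pb (3*i+5) ∧
      pad (6*n) v (6*i+5) = Pl (3*i+2)/α * Pb (3*i+5) := by
    intro i hi
    have h0 : 6*i < 6*n := by omega
    have h1 : 6*i+1 < 6*n := by omega
    have h2 : 6*i+2 < 6*n := by omega
    have h3 : 6*i+3 < 6*n := by omega
    have h4 : 6*i+4 < 6*n := by omega
    have h5 : 6*i+5 < 6*n := by omega
    obtain ⟨hb0, hb1, hb2, hb3, hb4, hb5⟩ := Phi_block n i hi b h0 h1 h2 h3 h4 h5
    obtain ⟨ha0, ha1, ha2, ha3, ha4, ha5⟩ := Phi_block n i hi (fun _ => α) h0 h1 h2 h3 h4 h5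
    have hE : ∀ (s : ℕ) (hs : s < 6) (h : 6*i+s < 6*n),
        (Emat n).mulVec lam ⟨6*i+s, h⟩ =
        E0 ⟨s, hs⟩ ⟨0, by omega⟩ * Pl (3*i)
        + E0 ⟨s, hs⟩ ⟨1, by omega⟩ * Pl (3*i+1)
        + E0 ⟨s, hs⟩ ⟨2, by omega⟩ * Pl (3*i+2) := fun s hs h => E_mulVec n i s hs hi lam h
    have hk : ∀ (r : Fin (6*n)), v r = (Emat n).mulVec lam r / Phi n (fun _ => α) r
        * Phi n b r := fun r => rfl
    refine ⟨?_, ?_, ?_, ?_, ?_, ?_⟩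
    · rw [pad_lt _ v (6*i) h0, hk, hb0, ha0, hPa 0 (by omega), hPa (3*i+1) (by omega),
        show (⟨6*i, h0⟩ : Fin (6*n)) = ⟨6*i+0, by omega⟩ from rfl, hE 0 (by omega) (by omega)]
      norm_num [E0, hPbdef, hPldef]
    · rw [pad_lt _ v (6*i+1) h1, hk, hb1, ha1, hPa (3*i+3) (by omega),
        hE 1 (by omega) (by omega)]
      norm_num [E0, hPbdef, hPldef]
    · rw [pad_lt _ v (6*i+2) h2, hk, hb2, ha2, hPa (3*i+3) (by omega),
        hE 2 (by omega) (by omega)]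
      norm_num [E0, hPbdef, hPldef]
    · rw [pad_lt _ v (6*i+3) h3, hk, hb3, ha3, hPa 2 (by omega), hPa (3*i+4) (by omega),
        hE 3 (by omega) (by omega)]
      norm_num [E0, hPbdef, hPldef]
    · rw [pad_lt _ v (6*i+4) h4, hk, hb4, ha4, hPa (3*i+5) (by omega),
        hE 4 (by omega) (by omega)]
      norm_num [E0, hPbdef, hPldef]
    · rw [pad_lt _ v (6*i+5) h5, hk, hb5, ha5, hPa (3*i+5) (by omega),
        hE 5 (by omega) (by omega)]
      norm_num [E0, hPbdef, hPldef]
  -- steady state component equations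
  have hstc : ∀ (m : Fin (3*n+3)), (Smat n).mulVec v m = 0 := fun m => congrFun hst m
  -- K * s_i = α * c_{i+1}
  have hKS : ∀ i, i < n → Pb 0 * Pb (3*i+1) = α * Pb (3*i+3) := by
    intro i hi
    obtain ⟨w0, w1, w2, _, _, _⟩ := hval i hi
    have hC : pad (6*n) v (6*((i+1)-1)) - pad (6*n) v (6*((i+1)-1)+1)
        - pad (6*n) v (6*((i+1)-1)+2) = 0 := by
      rw [← S_mulVec_C n (i+1) (by omega) (by omega) v (by omega)]
      exact hstc _
    have hC' : pad (6*n) v (6*i) - pad (6*n) v (6*i+1) - pad (6*n) v (6*i+2) = 0 := hC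
    rw [w0, w1, w2] at hC'
    field_simp at hC'
    have key : α * (α * ((Pl (3*i) + Pl (3*i+2)) * (Pb 0 * Pb (3*i+1) - α * Pb (3*i+3)))) = 0 := by
      linear_combination α^2 * hC'
    have hl : Pl (3*i) + Pl (3*i+2) ≠ 0 := by
      have := hPl (3*i) (by omega)
      have := hPl (3*i+2) (by omega)
      positivity
    have := mul_cancel0 hl (mul_cancel0 hα' (mul_cancel0 hα' key))
    linarith
  -- F * s_{i+1} = α * d_{i+1}
  have hFS : ∀ i, i < n → Pb 2 * Pb (3*i+4) = α * Pb (3*i+5) := by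
    intro i hi
    obtain ⟨_, _, _, w3, w4, w5⟩ := hval i hi
    have hD : pad (6*n) v (6*((i+1)-1)+3) - pad (6*n) v (6*((i+1)-1)+4)
        - pad (6*n) v (6*((i+1)-1)+5) = 0 := by
      rw [← S_mulVec_D n (i+1) (by omega) (by omega) v (by omega)]
      exact hstc _
    have hD' : pad (6*n) v (6*i+3) - pad (6*n) v (6*i+4) - pad (6*n) v (6*i+5) = 0 := hD
    rw [w3, w4, w5] at hD'
    field_simp at hD'
    have key : α * (α * ((Pl (3*i+1) + Pl (3*i+2)) * (Pb 2 * Pb (3*i+4) - α * Pb (3*i+5)))) = 0 := by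
      linear_combination α^2 * hD'
    have hl : Pl (3*i+1) + Pl (3*i+2) ≠ 0 := by
      have := hPl (3*i+1) (by omega)
      have := hPl (3*i+2) (by omega)
      positivity
    have := mul_cancel0 hl (mul_cancel0 hα' (mul_cancel0 hα' key))
    linarith
  -- c_n = d_n
  have hCDn : Pb (3*(n-1)+3) = Pb (3*(n-1)+5) := by
    obtain ⟨_, _, w2, w3, w4, _⟩ := hval (n-1) (by omega)
    have hSn : pad (6*n) v (6*(n-1)+2) - pad (6*n) v (6*(n-1)+3)
        + pad (6*n) v (6*(n-1)+4) = 0 := by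
      rw [← S_mulVec_Sn n (by omega) v (by omega)]
      exact hstc _
    rw [w2, w3, w4, hFS (n-1) (by omega)] at hSn
    field_simp at hSn
    have key : α * (α * (α * (Pl (3*(n-1)+2)
        * (Pb (3*(n-1)+3) - Pb (3*(n-1)+5))))) = 0 := by
      linear_combination α^3 * hSn
    have hl : Pl (3*(n-1)+2) ≠ 0 := ne_of_gt (hPl _ (by omega))
    have := mul_cancel0 hl (mul_cancel0 hα' (mul_cancel0 hα' (mul_cancel0 hα' key)))
    linarith
  -- recursion for c_q = d_q
  have hCDstep : ∀ q, 1 ≤ q → q < n → Pb (3*q+3) = Pb (3*q+5) →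
      Pb (3*(q-1)+3) = Pb (3*(q-1)+5) := by
    intro q hq1 hqn hnext
    obtain ⟨_, _, w2, w3, w4, _⟩ := hval (q-1) (by omega)
    obtain ⟨u0, u1, _, _, _, u5⟩ := hval q (by omega)
    have hSm : (pad (6*n) v (6*(q-1)+2) - pad (6*n) v (6*(q-1)+3) + pad (6*n) v (6*(q-1)+4))
        + (-(pad (6*n) v (6*q)) + pad (6*n) v (6*q+1) + pad (6*n) v (6*q+5)) = 0 := by
      rw [← S_mulVec_Smid n q hq1 hqn v (by omega)]
      exact hstc _
    rw [w2, w3, w4, u0, u1, u5, hFS (q-1) (by omega), hKS q (by omega)] at hSm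
    field_simp at hSm
    have key : α^7 * (Pl (3*(q-1)+2) * (Pb (3*(q-1)+3) - Pb (3*(q-1)+5))
        + Pl (3*q+2) * (Pb (3*q+5) - Pb (3*q+3))) = 0 := by
      linear_combination α^7 * hSm
    have h7 : (α^7 : ℝ) ≠ 0 := pow_ne_zero _ hα'
    have hkey2 := mul_cancel0 h7 key
    have hl : Pl (3*(q-1)+2) ≠ 0 := ne_of_gt (hPl _ (by omega))
    have : Pl (3*(q-1)+2) * (Pb (3*(q-1)+3) - Pb (3*(q-1)+5)) = 0 := by
      rw [hnext] at hkey2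
      linarith [hkey2]
    have := mul_cancel0 hl this
    linarith
  -- all c_q = d_q
  have hCD : ∀ q, 1 ≤ q → q ≤ n → Pb (3*q) = Pb (3*q+2) := by
    have main : ∀ t q, 1 ≤ q → q ≤ n → n - q = t → Pb (3*(q-1)+3) = Pb (3*(q-1)+5) := by
      intro t
      induction t with
      | zero =>
          intro q hq1 hqn ht
          have : q = n := by omega
          subst this
          exact hCDn
      | succ t ih =>
          intro q hq1 hqn ht
          have hqlt : q < n := by omega
          have hnext : Pb (3*q+3) = Pb (3*q+5) := by
            have := ih (q+1) (by omega) (by omega) (by omega)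
            have e3 : 3*(q+1-1)+3 = 3*q+3 := by omega
            have e5 : 3*(q+1-1)+5 = 3*q+5 := by omega
            rwa [e3, e5] at this
          exact hCDstep q hq1 hqlt hnext
    intro q hq1 hqn
    have := main (n - q) q hq1 hqn rfl
    have e3 : 3*(q-1)+3 = 3*q := by omega
    have e5 : 3*(q-1)+5 = 3*q+2 := by omega
    rwa [e3, e5] at this
  -- conservation components
  have hZ0 : ∑ q ∈ range (n+1), Pb (3*q) = ((n:ℝ)+1)*α := by
    have h := congrFun hcons ⟨0, by omega⟩
    rw [Z_mulVec_0 n b (by omega), Z_mulVec_0 n (fun _ => α) (by omega)] at h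
    rw [hPbdef, h, Finset.sum_congr rfl (fun q hq => hPa (3*q)
      (by have := Finset.mem_range.mp hq; omega)), Finset.sum_const, Finset.card_range,
      nsmul_eq_mul]
    push_cast; ring
  have hZ2 : ∑ q ∈ range (n+1), Pb (3*q+2) = ((n:ℝ)+1)*α := by
    have h := congrFun hcons ⟨2, by omega⟩
    rw [Z_mulVec_2 n b (by omega), Z_mulVec_2 n (fun _ => α) (by omega)] at h
    rw [hPbdef, h, Finset.sum_congr rfl (fun q hq => hPa (3*q+2)
      (by have := Finset.mem_range.mp hq; omega)), Finset.sum_const, Finset.card_range,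
      nsmul_eq_mul]
    push_cast; ring
  have hZ1 : -(Pb 0) - Pb 2 + ∑ q ∈ range (n+1), Pb (3*q+1) = ((n:ℝ)-1)*α := by
    have h := congrFun hcons ⟨1, by omega⟩
    rw [Z_mulVec_1 n b (by omega), Z_mulVec_1 n (fun _ => α) (by omega)] at h
    rw [hPbdef, h, hPa 0 (by omega), hPa 2 (by omega),
      Finset.sum_congr rfl (fun q hq => hPa (3*q+1)
      (by have := Finset.mem_range.mp hq; omega)), Finset.sum_const, Finset.card_range,
      nsmul_eq_mul]
    push_cast; ring
  -- K = F
  rw [Finset.sum_range_succ'] at hZ0 hZ2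
  have e00 : Pb (3*0) = Pb 0 := rfl
  have e02 : Pb (3*0+2) = Pb 2 := rfl
  rw [e00] at hZ0
  rw [e02] at hZ2
  have hsum02 : ∑ q ∈ range n, Pb (3*(q+1)) = ∑ q ∈ range n, Pb (3*(q+1)+2) :=
    Finset.sum_congr rfl (fun q hq => hCD (q+1) (by omega)
      (by have := Finset.mem_range.mp hq; omega))
  have hKF : Pb 0 = Pb 2 := by
    rw [hsum02] at hZ0
    linarith
  -- s_i constant
  have hSstep : ∀ i, i < n → Pb (3*i+4) = Pb (3*i+1) := by
    intro i hi
    have h1 := hKS i hi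
    have h2 := hFS i hi
    have h3 := hCD (i+1) (by omega) (by omega)
    rw [show 3*(i+1) = 3*i+3 by ring, show 3*i+3+2 = 3*i+5 by ring] at h3
    have hne : Pb 0 ≠ 0 := ne_of_gt (hPb 0 (by omega))
    apply mul_left_cancel₀ hne
    rw [h1, h3, ← h2, hKF]
  have hSc : ∀ i, i ≤ n → Pb (3*i+1) = Pb 1 := by
    intro i
    induction i with
    | zero => intro _; rfl
    | succ i ih =>
        intro hi
        have := hSstep i (by omega)
        rw [show 3*(i+1)+1 = 3*i+4 by ring, this]
        exact ih (by omega)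
  -- the two scalar equations
  have hterm : ∀ q ∈ range n, Pb (3*(q+1)) = Pb 0 * Pb 1 / α := by
    intro q hq
    have hq' : q < n := Finset.mem_range.mp hq
    have h1 := hKS q hq'
    rw [hSc q (by omega)] at h1
    rw [show 3*(q+1) = 3*q+3 by ring]
    field_simp
    linear_combination -h1
  rw [Finset.sum_congr rfl hterm, Finset.sum_const, Finset.card_range, nsmul_eq_mul] at hZ0
  have hsum1 : ∑ q ∈ range (n+1), Pb (3*q+1) = ((n:ℝ)+1) * Pb 1 := by
    rw [Finset.sum_congr rfl (fun q hq => hSc q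
      (by have := Finset.mem_range.mp hq; omega)), Finset.sum_const, Finset.card_range,
      nsmul_eq_mul]
    push_cast; ring
  rw [hsum1, ← hKF] at hZ1
  -- solve for Pb 0 and Pb 1
  have E1' : (n:ℝ)*(Pb 0 * Pb 1) + Pb 0 * α = ((n:ℝ)+1)*α^2 := by
    field_simp at hZ0
    linear_combination hZ0
  have key : (Pb 0 - α) * (2*(n:ℝ)*(Pb 0) + ((n:ℝ)+1)^2*α) = 0 := by
    linear_combination ((n:ℝ)+1)*E1' - (n:ℝ)*(Pb 0)*hZ1
  have hP0 : 0 < Pb 0 := hPb 0 (by omega)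
  have hK : Pb 0 = α := by
    rcases mul_eq_zero.mp key with h | h
    · linarith
    · have hnn : (0:ℝ) ≤ (n:ℝ) := Nat.cast_nonneg n
      have : 0 < 2*(n:ℝ)*(Pb 0) + ((n:ℝ)+1)^2*α := by positivity
      linarith
  have hs1 : Pb 1 = α := by
    have hne : ((n:ℝ)+1) ≠ 0 := by positivity
    apply mul_left_cancel₀ hne
    rw [hK] at hZ1
    linarith
  have hF : Pb 2 = α := by rw [← hKF, hK]
  have hc : ∀ q, 1 ≤ q → q ≤ n → Pb (3*q) = α := by
    intro q hq1 hqn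
    have h := hKS (q-1) (by omega)
    rw [hSc (q-1) (by omega), hs1, hK, show 3*(q-1)+3 = 3*q by omega] at h
    exact (mul_left_cancel₀ hα' h).symm
  have hd : ∀ q, 1 ≤ q → q ≤ n → Pb (3*q+2) = α := by
    intro q hq1 hqn
    rw [← hCD q hq1 hqn]
    exact hc q hq1 hqn
  have hs : ∀ q, q ≤ n → Pb (3*q+1) = α := fun q hq => (hSc q hq).trans hs1
  -- conclude
  funext j
  have hj : (j:ℕ) < 3*n+3 := j.isLt
  have hbj : b j = Pb (j:ℕ) := by
    rw [hPbdef, pad_lt _ b _ hj]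
  show b j = α
  rw [hbj]
  obtain ⟨q, r, hr3, hqle, hjv⟩ : ∃ q r, r < 3 ∧ q ≤ n ∧ (j:ℕ) = 3*q+r :=
    ⟨(j:ℕ)/3, (j:ℕ)%3, by omega, by omega, by omega⟩
  rw [hjv]
  have hr : r = 0 ∨ r = 1 ∨ r = 2 := by omega
  rcases hr with h | h | h <;> subst h
  · rcases Nat.eq_zero_or_pos q with h0 | h0
    · subst h0
      exact hK
    · exact hc q h0 hqle
  · exact hs q hqle
  · rcases Nat.eq_zero_or_pos q with h0 | h0
    · subst h0
      exact hF
    · exact hd q h0 hqle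

end Part7
end Phos
namespace Phos

/-- For `a = α·𝟙` with `α > 0`: `F1 ≡ 0`,
`P(ξ) = (2α²/(n+1)²)(ξⁿ−1)(ξ^{n+1}−1)` whose only positive zero is `ξ = 1`
(a zero of multiplicity two), the only `g ∈ ℝ_{>0}³` with `Θ(g,a) = 0` is
`g = (1,1,1)`, and for every `λ ∈ ℝ_{>0}^{3n}` the vector `a` is the unique
positive steady state of `ẋ = S diag(κ(a,λ)) Φ(x)` in the coset `Z x = Z a`. -/
theorem constant_vector_unique_steady_state (n : ℕ) (hn : 2 ≤ n)
    (α : ℝ) (hα : 0 < α) :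
    (∀ ξ : ℝ, F1 n (fun _ => α) ξ = 0) ∧
    (∀ ξ : ℝ, Pp n (fun _ => α) ξ =
      2 * α^2 / ((n : ℝ) + 1)^2 * (ξ^n - 1) * (ξ^(n+1) - 1)) ∧
    (∀ ξ : ℝ, 0 < ξ → (Pp n (fun _ => α) ξ = 0 ↔ ξ = 1)) ∧
    (∃ p : Polynomial ℝ, (∀ ξ : ℝ, Pp n (fun _ => α) ξ = p.eval ξ) ∧
      p.rootMultiplicity 1 = 2) ∧
    (∀ g : Fin 3 → ℝ, (∀ i, 0 < g i) →
      (Theta n g (fun _ => α) = 0 ↔ g = fun _ => 1)) ∧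
    (∀ lam : Fin (3*n) → ℝ, (∀ c, 0 < lam c) →
      isSteady n (kappaOf n (fun _ => α) lam) (fun _ => α) ∧
      ∀ b : Fin (3*n+3) → ℝ, (∀ j, 0 < b j) →
        isSteady n (kappaOf n (fun _ => α) lam) b →
        (Zmat n).mulVec b = (Zmat n).mulVec (fun _ => α) →
        b = fun _ => α) :=
  ⟨fun ξ => F1_const n α ξ, fun ξ => Pp_const n α hα ξ,
   fun ξ hξ => Pp_root_iff n hn α hα ξ hξ, exists_poly n hn α hα,
   fun g hg => theta_iff n hn α hα g hg,
   fun lam hlam => ⟨isSteady_const n α hα lam,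
     fun b hb hst hcons => steady_unique n hn α hα lam hlam b hb hst hcons⟩⟩

end Phos
end

section
/- (Counterexample to the Wang–Sontag conjecture for n = 4) For the 4-site sequential distributive phosphorylation network there exist a rate constant vector κ ∈ ℝ_{>0}^{24} and seven pairwise distinct vectors b⁽¹⁾, …, b⁽⁷⁾ ∈ ℝ_{>0}^{15} such that S diag(κ) Φ(b⁽ʲ⁾) = 0 for all j = 1,…,7 and Z b⁽¹⁾ = Z b⁽²⁾ = ⋯ = Z b⁽⁷⁾; i.e., the 4-site system can have 7 = 2·4−1 positive steady states within one coset of the stoichiometric subspace, exceeding the conjectured bound of 5. -/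
open Finset

namespace Phos


@[simp] lemma val24_0 : ((0 : Fin (6*4)) : ℕ) = 0 := rfl
@[simp] lemma val24_1 : ((1 : Fin (6*4)) : ℕ) = 1 := rfl
@[simp] lemma val24_2 : ((2 : Fin (6*4)) : ℕ) = 2 := rfl
@[simp] lemma val24_3 : ((3 : Fin (6*4)) : ℕ) = 3 := rfl
@[simp] lemma val24_4 : ((4 : Fin (6*4)) : ℕ) = 4 := rfl
@[simp] lemma val24_5 : ((5 : Fin (6*4)) : ℕ) = 5 := rfl
@[simp] lemma val24_6 : ((6 : Fin (6*4)) : ℕ) = 6 := rfl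
@[simp] lemma val24_7 : ((7 : Fin (6*4)) : ℕ) = 7 := rfl
@[simp] lemma val24_8 : ((8 : Fin (6*4)) : ℕ) = 8 := rfl
@[simp] lemma val24_9 : ((9 : Fin (6*4)) : ℕ) = 9 := rfl
@[simp] lemma val24_10 : ((10 : Fin (6*4)) : ℕ) = 10 := rfl
@[simp] lemma val24_11 : ((11 : Fin (6*4)) : ℕ) = 11 := rfl
@[simp] lemma val24_12 : ((12 : Fin (6*4)) : ℕ) = 12 := rfl
@[simp] lemma val24_13 : ((13 : Fin (6*4)) : ℕ) = 13 := rfl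
@[simp] lemma val24_14 : ((14 : Fin (6*4)) : ℕ) = 14 := rfl
@[simp] lemma val24_15 : ((15 : Fin (6*4)) : ℕ) = 15 := rfl
@[simp] lemma val24_16 : ((16 : Fin (6*4)) : ℕ) = 16 := rfl
@[simp] lemma val24_17 : ((17 : Fin (6*4)) : ℕ) = 17 := rfl
@[simp] lemma val24_18 : ((18 : Fin (6*4)) : ℕ) = 18 := rfl
@[simp] lemma val24_19 : ((19 : Fin (6*4)) : ℕ) = 19 := rfl
@[simp] lemma val24_20 : ((20 : Fin (6*4)) : ℕ) = 20 := rfl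
@[simp] lemma val24_21 : ((21 : Fin (6*4)) : ℕ) = 21 := rfl
@[simp] lemma val24_22 : ((22 : Fin (6*4)) : ℕ) = 22 := rfl
@[simp] lemma val24_23 : ((23 : Fin (6*4)) : ℕ) = 23 := rfl

@[simp] lemma val15_0 : ((0 : Fin (3*4+3)) : ℕ) = 0 := rfl
@[simp] lemma val15_1 : ((1 : Fin (3*4+3)) : ℕ) = 1 := rfl
@[simp] lemma val15_2 : ((2 : Fin (3*4+3)) : ℕ) = 2 := rfl
@[simp] lemma val15_3 : ((3 : Fin (3*4+3)) : ℕ) = 3 := rfl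
@[simp] lemma val15_4 : ((4 : Fin (3*4+3)) : ℕ) = 4 := rfl
@[simp] lemma val15_5 : ((5 : Fin (3*4+3)) : ℕ) = 5 := rfl
@[simp] lemma val15_6 : ((6 : Fin (3*4+3)) : ℕ) = 6 := rfl
@[simp] lemma val15_7 : ((7 : Fin (3*4+3)) : ℕ) = 7 := rfl
@[simp] lemma val15_8 : ((8 : Fin (3*4+3)) : ℕ) = 8 := rfl
@[simp] lemma val15_9 : ((9 : Fin (3*4+3)) : ℕ) = 9 := rfl
@[simp] lemma val15_10 : ((10 : Fin (3*4+3)) : ℕ) = 10 := rfl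
@[simp] lemma val15_11 : ((11 : Fin (3*4+3)) : ℕ) = 11 := rfl
@[simp] lemma val15_12 : ((12 : Fin (3*4+3)) : ℕ) = 12 := rfl
@[simp] lemma val15_13 : ((13 : Fin (3*4+3)) : ℕ) = 13 := rfl
@[simp] lemma val15_14 : ((14 : Fin (3*4+3)) : ℕ) = 14 := rfl

@[simp] lemma val3_0 : ((0 : Fin (3)) : ℕ) = 0 := rfl
@[simp] lemma val3_1 : ((1 : Fin (3)) : ℕ) = 1 := rfl
@[simp] lemma val3_2 : ((2 : Fin (3)) : ℕ) = 2 := rfl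

@[simp] lemma vec6_mk_0 {α : Type*} (a0 a1 a2 a3 a4 a5 : α) (h : (0:ℕ) < 6) : (![a0,a1,a2,a3,a4,a5] : Fin (6) → α) ⟨0, h⟩ = a0 := rfl
@[simp] lemma vec6_on_0 {α : Type*} (a0 a1 a2 a3 a4 a5 : α) : (![a0,a1,a2,a3,a4,a5] : Fin (6) → α) 0 = a0 := rfl
@[simp] lemma vec6_mk_1 {α : Type*} (a0 a1 a2 a3 a4 a5 : α) (h : (1:ℕ) < 6) : (![a0,a1,a2,a3,a4,a5] : Fin (6) → α) ⟨1, h⟩ = a1 := rfl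
@[simp] lemma vec6_on_1 {α : Type*} (a0 a1 a2 a3 a4 a5 : α) : (![a0,a1,a2,a3,a4,a5] : Fin (6) → α) 1 = a1 := rfl
@[simp] lemma vec6_mk_2 {α : Type*} (a0 a1 a2 a3 a4 a5 : α) (h : (2:ℕ) < 6) : (![a0,a1,a2,a3,a4,a5] : Fin (6) → α) ⟨2, h⟩ = a2 := rfl
@[simp] lemma vec6_on_2 {α : Type*} (a0 a1 a2 a3 a4 a5 : α) : (![a0,a1,a2,a3,a4,a5] : Fin (6) → α) 2 = a2 := rfl
@[simp] lemma vec6_mk_3 {α : Type*} (a0 a1 a2 a3 a4 a5 : α) (h : (3:ℕ) < 6) : (![a0,a1,a2,a3,a4,a5] : Fin (6) → α) ⟨3, h⟩ = a3 := rfl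
@[simp] lemma vec6_on_3 {α : Type*} (a0 a1 a2 a3 a4 a5 : α) : (![a0,a1,a2,a3,a4,a5] : Fin (6) → α) 3 = a3 := rfl
@[simp] lemma vec6_mk_4 {α : Type*} (a0 a1 a2 a3 a4 a5 : α) (h : (4:ℕ) < 6) : (![a0,a1,a2,a3,a4,a5] : Fin (6) → α) ⟨4, h⟩ = a4 := rfl
@[simp] lemma vec6_on_4 {α : Type*} (a0 a1 a2 a3 a4 a5 : α) : (![a0,a1,a2,a3,a4,a5] : Fin (6) → α) 4 = a4 := rfl
@[simp] lemma vec6_mk_5 {α : Type*} (a0 a1 a2 a3 a4 a5 : α) (h : (5:ℕ) < 6) : (![a0,a1,a2,a3,a4,a5] : Fin (6) → α) ⟨5, h⟩ = a5 := rfl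
@[simp] lemma vec6_on_5 {α : Type*} (a0 a1 a2 a3 a4 a5 : α) : (![a0,a1,a2,a3,a4,a5] : Fin (6) → α) 5 = a5 := rfl

@[simp] lemma vec15_mk_0 {α : Type*} (a0 a1 a2 a3 a4 a5 a6 a7 a8 a9 a10 a11 a12 a13 a14 : α) (h : (0:ℕ) < 15) : (![a0,a1,a2,a3,a4,a5,a6,a7,a8,a9,a10,a11,a12,a13,a14] : Fin (3*4+3) → α) ⟨0, h⟩ = a0 := rfl
@[simp] lemma vec15_on_0 {α : Type*} (a0 a1 a2 a3 a4 a5 a6 a7 a8 a9 a10 a11 a12 a13 a14 : α) : (![a0,a1,a2,a3,a4,a5,a6,a7,a8,a9,a10,a11,a12,a13,a14] : Fin (3*4+3) → α) 0 = a0 := rfl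
@[simp] lemma vec15_mk_1 {α : Type*} (a0 a1 a2 a3 a4 a5 a6 a7 a8 a9 a10 a11 a12 a13 a14 : α) (h : (1:ℕ) < 15) : (![a0,a1,a2,a3,a4,a5,a6,a7,a8,a9,a10,a11,a12,a13,a14] : Fin (3*4+3) → α) ⟨1, h⟩ = a1 := rfl
@[simp] lemma vec15_on_1 {α : Type*} (a0 a1 a2 a3 a4 a5 a6 a7 a8 a9 a10 a11 a12 a13 a14 : α) : (![a0,a1,a2,a3,a4,a5,a6,a7,a8,a9,a10,a11,a12,a13,a14] : Fin (3*4+3) → α) 1 = a1 := rfl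
@[simp] lemma vec15_mk_2 {α : Type*} (a0 a1 a2 a3 a4 a5 a6 a7 a8 a9 a10 a11 a12 a13 a14 : α) (h : (2:ℕ) < 15) : (![a0,a1,a2,a3,a4,a5,a6,a7,a8,a9,a10,a11,a12,a13,a14] : Fin (3*4+3) → α) ⟨2, h⟩ = a2 := rfl
@[simp] lemma vec15_on_2 {α : Type*} (a0 a1 a2 a3 a4 a5 a6 a7 a8 a9 a10 a11 a12 a13 a14 : α) : (![a0,a1,a2,a3,a4,a5,a6,a7,a8,a9,a10,a11,a12,a13,a14] : Fin (3*4+3) → α) 2 = a2 := rfl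
@[simp] lemma vec15_mk_3 {α : Type*} (a0 a1 a2 a3 a4 a5 a6 a7 a8 a9 a10 a11 a12 a13 a14 : α) (h : (3:ℕ) < 15) : (![a0,a1,a2,a3,a4,a5,a6,a7,a8,a9,a10,a11,a12,a13,a14] : Fin (3*4+3) → α) ⟨3, h⟩ = a3 := rfl
@[simp] lemma vec15_on_3 {α : Type*} (a0 a1 a2 a3 a4 a5 a6 a7 a8 a9 a10 a11 a12 a13 a14 : α) : (![a0,a1,a2,a3,a4,a5,a6,a7,a8,a9,a10,a11,a12,a13,a14] : Fin (3*4+3) → α) 3 = a3 := rfl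
@[simp] lemma vec15_mk_4 {α : Type*} (a0 a1 a2 a3 a4 a5 a6 a7 a8 a9 a10 a11 a12 a13 a14 : α) (h : (4:ℕ) < 15) : (![a0,a1,a2,a3,a4,a5,a6,a7,a8,a9,a10,a11,a12,a13,a14] : Fin (3*4+3) → α) ⟨4, h⟩ = a4 := rfl
@[simp] lemma vec15_on_4 {α : Type*} (a0 a1 a2 a3 a4 a5 a6 a7 a8 a9 a10 a11 a12 a13 a14 : α) : (![a0,a1,a2,a3,a4,a5,a6,a7,a8,a9,a10,a11,a12,a13,a14] : Fin (3*4+3) → α) 4 = a4 := rfl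
@[simp] lemma vec15_mk_5 {α : Type*} (a0 a1 a2 a3 a4 a5 a6 a7 a8 a9 a10 a11 a12 a13 a14 : α) (h : (5:ℕ) < 15) : (![a0,a1,a2,a3,a4,a5,a6,a7,a8,a9,a10,a11,a12,a13,a14] : Fin (3*4+3) → α) ⟨5, h⟩ = a5 := rfl
@[simp] lemma vec15_on_5 {α : Type*} (a0 a1 a2 a3 a4 a5 a6 a7 a8 a9 a10 a11 a12 a13 a14 : α) : (![a0,a1,a2,a3,a4,a5,a6,a7,a8,a9,a10,a11,a12,a13,a14] : Fin (3*4+3) → α) 5 = a5 := rfl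
@[simp] lemma vec15_mk_6 {α : Type*} (a0 a1 a2 a3 a4 a5 a6 a7 a8 a9 a10 a11 a12 a13 a14 : α) (h : (6:ℕ) < 15) : (![a0,a1,a2,a3,a4,a5,a6,a7,a8,a9,a10,a11,a12,a13,a14] : Fin (3*4+3) → α) ⟨6, h⟩ = a6 := rfl
@[simp] lemma vec15_on_6 {α : Type*} (a0 a1 a2 a3 a4 a5 a6 a7 a8 a9 a10 a11 a12 a13 a14 : α) : (![a0,a1,a2,a3,a4,a5,a6,a7,a8,a9,a10,a11,a12,a13,a14] : Fin (3*4+3) → α) 6 = a6 := rfl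
@[simp] lemma vec15_mk_7 {α : Type*} (a0 a1 a2 a3 a4 a5 a6 a7 a8 a9 a10 a11 a12 a13 a14 : α) (h : (7:ℕ) < 15) : (![a0,a1,a2,a3,a4,a5,a6,a7,a8,a9,a10,a11,a12,a13,a14] : Fin (3*4+3) → α) ⟨7, h⟩ = a7 := rfl
@[simp] lemma vec15_on_7 {α : Type*} (a0 a1 a2 a3 a4 a5 a6 a7 a8 a9 a10 a11 a12 a13 a14 : α) : (![a0,a1,a2,a3,a4,a5,a6,a7,a8,a9,a10,a11,a12,a13,a14] : Fin (3*4+3) → α) 7 = a7 := rfl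
@[simp] lemma vec15_mk_8 {α : Type*} (a0 a1 a2 a3 a4 a5 a6 a7 a8 a9 a10 a11 a12 a13 a14 : α) (h : (8:ℕ) < 15) : (![a0,a1,a2,a3,a4,a5,a6,a7,a8,a9,a10,a11,a12,a13,a14] : Fin (3*4+3) → α) ⟨8, h⟩ = a8 := rfl
@[simp] lemma vec15_on_8 {α : Type*} (a0 a1 a2 a3 a4 a5 a6 a7 a8 a9 a10 a11 a12 a13 a14 : α) : (![a0,a1,a2,a3,a4,a5,a6,a7,a8,a9,a10,a11,a12,a13,a14] : Fin (3*4+3) → α) 8 = a8 := rfl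
@[simp] lemma vec15_mk_9 {α : Type*} (a0 a1 a2 a3 a4 a5 a6 a7 a8 a9 a10 a11 a12 a13 a14 : α) (h : (9:ℕ) < 15) : (![a0,a1,a2,a3,a4,a5,a6,a7,a8,a9,a10,a11,a12,a13,a14] : Fin (3*4+3) → α) ⟨9, h⟩ = a9 := rfl
@[simp] lemma vec15_on_9 {α : Type*} (a0 a1 a2 a3 a4 a5 a6 a7 a8 a9 a10 a11 a12 a13 a14 : α) : (![a0,a1,a2,a3,a4,a5,a6,a7,a8,a9,a10,a11,a12,a13,a14] : Fin (3*4+3) → α) 9 = a9 := rfl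
@[simp] lemma vec15_mk_10 {α : Type*} (a0 a1 a2 a3 a4 a5 a6 a7 a8 a9 a10 a11 a12 a13 a14 : α) (h : (10:ℕ) < 15) : (![a0,a1,a2,a3,a4,a5,a6,a7,a8,a9,a10,a11,a12,a13,a14] : Fin (3*4+3) → α) ⟨10, h⟩ = a10 := rfl
@[simp] lemma vec15_on_10 {α : Type*} (a0 a1 a2 a3 a4 a5 a6 a7 a8 a9 a10 a11 a12 a13 a14 : α) : (![a0,a1,a2,a3,a4,a5,a6,a7,a8,a9,a10,a11,a12,a13,a14] : Fin (3*4+3) → α) 10 = a10 := rfl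
@[simp] lemma vec15_mk_11 {α : Type*} (a0 a1 a2 a3 a4 a5 a6 a7 a8 a9 a10 a11 a12 a13 a14 : α) (h : (11:ℕ) < 15) : (![a0,a1,a2,a3,a4,a5,a6,a7,a8,a9,a10,a11,a12,a13,a14] : Fin (3*4+3) → α) ⟨11, h⟩ = a11 := rfl
@[simp] lemma vec15_on_11 {α : Type*} (a0 a1 a2 a3 a4 a5 a6 a7 a8 a9 a10 a11 a12 a13 a14 : α) : (![a0,a1,a2,a3,a4,a5,a6,a7,a8,a9,a10,a11,a12,a13,a14] : Fin (3*4+3) → α) 11 = a11 := rfl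
@[simp] lemma vec15_mk_12 {α : Type*} (a0 a1 a2 a3 a4 a5 a6 a7 a8 a9 a10 a11 a12 a13 a14 : α) (h : (12:ℕ) < 15) : (![a0,a1,a2,a3,a4,a5,a6,a7,a8,a9,a10,a11,a12,a13,a14] : Fin (3*4+3) → α) ⟨12, h⟩ = a12 := rfl
@[simp] lemma vec15_on_12 {α : Type*} (a0 a1 a2 a3 a4 a5 a6 a7 a8 a9 a10 a11 a12 a13 a14 : α) : (![a0,a1,a2,a3,a4,a5,a6,a7,a8,a9,a10,a11,a12,a13,a14] : Fin (3*4+3) → α) 12 = a12 := rfl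
@[simp] lemma vec15_mk_13 {α : Type*} (a0 a1 a2 a3 a4 a5 a6 a7 a8 a9 a10 a11 a12 a13 a14 : α) (h : (13:ℕ) < 15) : (![a0,a1,a2,a3,a4,a5,a6,a7,a8,a9,a10,a11,a12,a13,a14] : Fin (3*4+3) → α) ⟨13, h⟩ = a13 := rfl
@[simp] lemma vec15_on_13 {α : Type*} (a0 a1 a2 a3 a4 a5 a6 a7 a8 a9 a10 a11 a12 a13 a14 : α) : (![a0,a1,a2,a3,a4,a5,a6,a7,a8,a9,a10,a11,a12,a13,a14] : Fin (3*4+3) → α) 13 = a13 := rfl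
@[simp] lemma vec15_mk_14 {α : Type*} (a0 a1 a2 a3 a4 a5 a6 a7 a8 a9 a10 a11 a12 a13 a14 : α) (h : (14:ℕ) < 15) : (![a0,a1,a2,a3,a4,a5,a6,a7,a8,a9,a10,a11,a12,a13,a14] : Fin (3*4+3) → α) ⟨14, h⟩ = a14 := rfl
@[simp] lemma vec15_on_14 {α : Type*} (a0 a1 a2 a3 a4 a5 a6 a7 a8 a9 a10 a11 a12 a13 a14 : α) : (![a0,a1,a2,a3,a4,a5,a6,a7,a8,a9,a10,a11,a12,a13,a14] : Fin (3*4+3) → α) 14 = a14 := rfl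

@[simp] lemma vec24_mk_0 {α : Type*} (a0 a1 a2 a3 a4 a5 a6 a7 a8 a9 a10 a11 a12 a13 a14 a15 a16 a17 a18 a19 a20 a21 a22 a23 : α) (h : (0:ℕ) < 24) : (![a0,a1,a2,a3,a4,a5,a6,a7,a8,a9,a10,a11,a12,a13,a14,a15,a16,a17,a18,a19,a20,a21,a22,a23] : Fin (6*4) → α) ⟨0, h⟩ = a0 := rfl
@[simp] lemma vec24_on_0 {α : Type*} (a0 a1 a2 a3 a4 a5 a6 a7 a8 a9 a10 a11 a12 a13 a14 a15 a16 a17 a18 a19 a20 a21 a22 a23 : α) : (![a0,a1,a2,a3,a4,a5,a6,a7,a8,a9,a10,a11,a12,a13,a14,a15,a16,a17,a18,a19,a20,a21,a22,a23] : Fin (6*4) → α) 0 = a0 := rfl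
@[simp] lemma vec24_mk_1 {α : Type*} (a0 a1 a2 a3 a4 a5 a6 a7 a8 a9 a10 a11 a12 a13 a14 a15 a16 a17 a18 a19 a20 a21 a22 a23 : α) (h : (1:ℕ) < 24) : (![a0,a1,a2,a3,a4,a5,a6,a7,a8,a9,a10,a11,a12,a13,a14,a15,a16,a17,a18,a19,a20,a21,a22,a23] : Fin (6*4) → α) ⟨1, h⟩ = a1 := rfl
@[simp] lemma vec24_on_1 {α : Type*} (a0 a1 a2 a3 a4 a5 a6 a7 a8 a9 a10 a11 a12 a13 a14 a15 a16 a17 a18 a19 a20 a21 a22 a23 : α) : (![a0,a1,a2,a3,a4,a5,a6,a7,a8,a9,a10,a11,a12,a13,a14,a15,a16,a17,a18,a19,a20,a21,a22,a23] : Fin (6*4) → α) 1 = a1 := rfl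
@[simp] lemma vec24_mk_2 {α : Type*} (a0 a1 a2 a3 a4 a5 a6 a7 a8 a9 a10 a11 a12 a13 a14 a15 a16 a17 a18 a19 a20 a21 a22 a23 : α) (h : (2:ℕ) < 24) : (![a0,a1,a2,a3,a4,a5,a6,a7,a8,a9,a10,a11,a12,a13,a14,a15,a16,a17,a18,a19,a20,a21,a22,a23] : Fin (6*4) → α) ⟨2, h⟩ = a2 := rfl
@[simp] lemma vec24_on_2 {α : Type*} (a0 a1 a2 a3 a4 a5 a6 a7 a8 a9 a10 a11 a12 a13 a14 a15 a16 a17 a18 a19 a20 a21 a22 a23 : α) : (![a0,a1,a2,a3,a4,a5,a6,a7,a8,a9,a10,a11,a12,a13,a14,a15,a16,a17,a18,a19,a20,a21,a22,a23] : Fin (6*4) → α) 2 = a2 := rfl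
@[simp] lemma vec24_mk_3 {α : Type*} (a0 a1 a2 a3 a4 a5 a6 a7 a8 a9 a10 a11 a12 a13 a14 a15 a16 a17 a18 a19 a20 a21 a22 a23 : α) (h : (3:ℕ) < 24) : (![a0,a1,a2,a3,a4,a5,a6,a7,a8,a9,a10,a11,a12,a13,a14,a15,a16,a17,a18,a19,a20,a21,a22,a23] : Fin (6*4) → α) ⟨3, h⟩ = a3 := rfl
@[simp] lemma vec24_on_3 {α : Type*} (a0 a1 a2 a3 a4 a5 a6 a7 a8 a9 a10 a11 a12 a13 a14 a15 a16 a17 a18 a19 a20 a21 a22 a23 : α) : (![a0,a1,a2,a3,a4,a5,a6,a7,a8,a9,a10,a11,a12,a13,a14,a15,a16,a17,a18,a19,a20,a21,a22,a23] : Fin (6*4) → α) 3 = a3 := rfl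
@[simp] lemma vec24_mk_4 {α : Type*} (a0 a1 a2 a3 a4 a5 a6 a7 a8 a9 a10 a11 a12 a13 a14 a15 a16 a17 a18 a19 a20 a21 a22 a23 : α) (h : (4:ℕ) < 24) : (![a0,a1,a2,a3,a4,a5,a6,a7,a8,a9,a10,a11,a12,a13,a14,a15,a16,a17,a18,a19,a20,a21,a22,a23] : Fin (6*4) → α) ⟨4, h⟩ = a4 := rfl
@[simp] lemma vec24_on_4 {α : Type*} (a0 a1 a2 a3 a4 a5 a6 a7 a8 a9 a10 a11 a12 a13 a14 a15 a16 a17 a18 a19 a20 a21 a22 a23 : α) : (![a0,a1,a2,a3,a4,a5,a6,a7,a8,a9,a10,a11,a12,a13,a14,a15,a16,a17,a18,a19,a20,a21,a22,a23] : Fin (6*4) → α) 4 = a4 := rfl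
@[simp] lemma vec24_mk_5 {α : Type*} (a0 a1 a2 a3 a4 a5 a6 a7 a8 a9 a10 a11 a12 a13 a14 a15 a16 a17 a18 a19 a20 a21 a22 a23 : α) (h : (5:ℕ) < 24) : (![a0,a1,a2,a3,a4,a5,a6,a7,a8,a9,a10,a11,a12,a13,a14,a15,a16,a17,a18,a19,a20,a21,a22,a23] : Fin (6*4) → α) ⟨5, h⟩ = a5 := rfl
@[simp] lemma vec24_on_5 {α : Type*} (a0 a1 a2 a3 a4 a5 a6 a7 a8 a9 a10 a11 a12 a13 a14 a15 a16 a17 a18 a19 a20 a21 a22 a23 : α) : (![a0,a1,a2,a3,a4,a5,a6,a7,a8,a9,a10,a11,a12,a13,a14,a15,a16,a17,a18,a19,a20,a21,a22,a23] : Fin (6*4) → α) 5 = a5 := rfl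
@[simp] lemma vec24_mk_6 {α : Type*} (a0 a1 a2 a3 a4 a5 a6 a7 a8 a9 a10 a11 a12 a13 a14 a15 a16 a17 a18 a19 a20 a21 a22 a23 : α) (h : (6:ℕ) < 24) : (![a0,a1,a2,a3,a4,a5,a6,a7,a8,a9,a10,a11,a12,a13,a14,a15,a16,a17,a18,a19,a20,a21,a22,a23] : Fin (6*4) → α) ⟨6, h⟩ = a6 := rfl
@[simp] lemma vec24_on_6 {α : Type*} (a0 a1 a2 a3 a4 a5 a6 a7 a8 a9 a10 a11 a12 a13 a14 a15 a16 a17 a18 a19 a20 a21 a22 a23 : α) : (![a0,a1,a2,a3,a4,a5,a6,a7,a8,a9,a10,a11,a12,a13,a14,a15,a16,a17,a18,a19,a20,a21,a22,a23] : Fin (6*4) → α) 6 = a6 := rfl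
@[simp] lemma vec24_mk_7 {α : Type*} (a0 a1 a2 a3 a4 a5 a6 a7 a8 a9 a10 a11 a12 a13 a14 a15 a16 a17 a18 a19 a20 a21 a22 a23 : α) (h : (7:ℕ) < 24) : (![a0,a1,a2,a3,a4,a5,a6,a7,a8,a9,a10,a11,a12,a13,a14,a15,a16,a17,a18,a19,a20,a21,a22,a23] : Fin (6*4) → α) ⟨7, h⟩ = a7 := rfl
@[simp] lemma vec24_on_7 {α : Type*} (a0 a1 a2 a3 a4 a5 a6 a7 a8 a9 a10 a11 a12 a13 a14 a15 a16 a17 a18 a19 a20 a21 a22 a23 : α) : (![a0,a1,a2,a3,a4,a5,a6,a7,a8,a9,a10,a11,a12,a13,a14,a15,a16,a17,a18,a19,a20,a21,a22,a23] : Fin (6*4) → α) 7 = a7 := rfl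
@[simp] lemma vec24_mk_8 {α : Type*} (a0 a1 a2 a3 a4 a5 a6 a7 a8 a9 a10 a11 a12 a13 a14 a15 a16 a17 a18 a19 a20 a21 a22 a23 : α) (h : (8:ℕ) < 24) : (![a0,a1,a2,a3,a4,a5,a6,a7,a8,a9,a10,a11,a12,a13,a14,a15,a16,a17,a18,a19,a20,a21,a22,a23] : Fin (6*4) → α) ⟨8, h⟩ = a8 := rfl
@[simp] lemma vec24_on_8 {α : Type*} (a0 a1 a2 a3 a4 a5 a6 a7 a8 a9 a10 a11 a12 a13 a14 a15 a16 a17 a18 a19 a20 a21 a22 a23 : α) : (![a0,a1,a2,a3,a4,a5,a6,a7,a8,a9,a10,a11,a12,a13,a14,a15,a16,a17,a18,a19,a20,a21,a22,a23] : Fin (6*4) → α) 8 = a8 := rfl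
@[simp] lemma vec24_mk_9 {α : Type*} (a0 a1 a2 a3 a4 a5 a6 a7 a8 a9 a10 a11 a12 a13 a14 a15 a16 a17 a18 a19 a20 a21 a22 a23 : α) (h : (9:ℕ) < 24) : (![a0,a1,a2,a3,a4,a5,a6,a7,a8,a9,a10,a11,a12,a13,a14,a15,a16,a17,a18,a19,a20,a21,a22,a23] : Fin (6*4) → α) ⟨9, h⟩ = a9 := rfl
@[simp] lemma vec24_on_9 {α : Type*} (a0 a1 a2 a3 a4 a5 a6 a7 a8 a9 a10 a11 a12 a13 a14 a15 a16 a17 a18 a19 a20 a21 a22 a23 : α) : (![a0,a1,a2,a3,a4,a5,a6,a7,a8,a9,a10,a11,a12,a13,a14,a15,a16,a17,a18,a19,a20,a21,a22,a23] : Fin (6*4) → α) 9 = a9 := rfl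
@[simp] lemma vec24_mk_10 {α : Type*} (a0 a1 a2 a3 a4 a5 a6 a7 a8 a9 a10 a11 a12 a13 a14 a15 a16 a17 a18 a19 a20 a21 a22 a23 : α) (h : (10:ℕ) < 24) : (![a0,a1,a2,a3,a4,a5,a6,a7,a8,a9,a10,a11,a12,a13,a14,a15,a16,a17,a18,a19,a20,a21,a22,a23] : Fin (6*4) → α) ⟨10, h⟩ = a10 := rfl
@[simp] lemma vec24_on_10 {α : Type*} (a0 a1 a2 a3 a4 a5 a6 a7 a8 a9 a10 a11 a12 a13 a14 a15 a16 a17 a18 a19 a20 a21 a22 a23 : α) : (![a0,a1,a2,a3,a4,a5,a6,a7,a8,a9,a10,a11,a12,a13,a14,a15,a16,a17,a18,a19,a20,a21,a22,a23] : Fin (6*4) → α) 10 = a10 := rfl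
@[simp] lemma vec24_mk_11 {α : Type*} (a0 a1 a2 a3 a4 a5 a6 a7 a8 a9 a10 a11 a12 a13 a14 a15 a16 a17 a18 a19 a20 a21 a22 a23 : α) (h : (11:ℕ) < 24) : (![a0,a1,a2,a3,a4,a5,a6,a7,a8,a9,a10,a11,a12,a13,a14,a15,a16,a17,a18,a19,a20,a21,a22,a23] : Fin (6*4) → α) ⟨11, h⟩ = a11 := rfl
@[simp] lemma vec24_on_11 {α : Type*} (a0 a1 a2 a3 a4 a5 a6 a7 a8 a9 a10 a11 a12 a13 a14 a15 a16 a17 a18 a19 a20 a21 a22 a23 : α) : (![a0,a1,a2,a3,a4,a5,a6,a7,a8,a9,a10,a11,a12,a13,a14,a15,a16,a17,a18,a19,a20,a21,a22,a23] : Fin (6*4) → α) 11 = a11 := rfl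
@[simp] lemma vec24_mk_12 {α : Type*} (a0 a1 a2 a3 a4 a5 a6 a7 a8 a9 a10 a11 a12 a13 a14 a15 a16 a17 a18 a19 a20 a21 a22 a23 : α) (h : (12:ℕ) < 24) : (![a0,a1,a2,a3,a4,a5,a6,a7,a8,a9,a10,a11,a12,a13,a14,a15,a16,a17,a18,a19,a20,a21,a22,a23] : Fin (6*4) → α) ⟨12, h⟩ = a12 := rfl
@[simp] lemma vec24_on_12 {α : Type*} (a0 a1 a2 a3 a4 a5 a6 a7 a8 a9 a10 a11 a12 a13 a14 a15 a16 a17 a18 a19 a20 a21 a22 a23 : α) : (![a0,a1,a2,a3,a4,a5,a6,a7,a8,a9,a10,a11,a12,a13,a14,a15,a16,a17,a18,a19,a20,a21,a22,a23] : Fin (6*4) → α) 12 = a12 := rfl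
@[simp] lemma vec24_mk_13 {α : Type*} (a0 a1 a2 a3 a4 a5 a6 a7 a8 a9 a10 a11 a12 a13 a14 a15 a16 a17 a18 a19 a20 a21 a22 a23 : α) (h : (13:ℕ) < 24) : (![a0,a1,a2,a3,a4,a5,a6,a7,a8,a9,a10,a11,a12,a13,a14,a15,a16,a17,a18,a19,a20,a21,a22,a23] : Fin (6*4) → α) ⟨13, h⟩ = a13 := rfl
@[simp] lemma vec24_on_13 {α : Type*} (a0 a1 a2 a3 a4 a5 a6 a7 a8 a9 a10 a11 a12 a13 a14 a15 a16 a17 a18 a19 a20 a21 a22 a23 : α) : (![a0,a1,a2,a3,a4,a5,a6,a7,a8,a9,a10,a11,a12,a13,a14,a15,a16,a17,a18,a19,a20,a21,a22,a23] : Fin (6*4) → α) 13 = a13 := rfl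
@[simp] lemma vec24_mk_14 {α : Type*} (a0 a1 a2 a3 a4 a5 a6 a7 a8 a9 a10 a11 a12 a13 a14 a15 a16 a17 a18 a19 a20 a21 a22 a23 : α) (h : (14:ℕ) < 24) : (![a0,a1,a2,a3,a4,a5,a6,a7,a8,a9,a10,a11,a12,a13,a14,a15,a16,a17,a18,a19,a20,a21,a22,a23] : Fin (6*4) → α) ⟨14, h⟩ = a14 := rfl
@[simp] lemma vec24_on_14 {α : Type*} (a0 a1 a2 a3 a4 a5 a6 a7 a8 a9 a10 a11 a12 a13 a14 a15 a16 a17 a18 a19 a20 a21 a22 a23 : α) : (![a0,a1,a2,a3,a4,a5,a6,a7,a8,a9,a10,a11,a12,a13,a14,a15,a16,a17,a18,a19,a20,a21,a22,a23] : Fin (6*4) → α) 14 = a14 := rfl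
@[simp] lemma vec24_mk_15 {α : Type*} (a0 a1 a2 a3 a4 a5 a6 a7 a8 a9 a10 a11 a12 a13 a14 a15 a16 a17 a18 a19 a20 a21 a22 a23 : α) (h : (15:ℕ) < 24) : (![a0,a1,a2,a3,a4,a5,a6,a7,a8,a9,a10,a11,a12,a13,a14,a15,a16,a17,a18,a19,a20,a21,a22,a23] : Fin (6*4) → α) ⟨15, h⟩ = a15 := rfl
@[simp] lemma vec24_on_15 {α : Type*} (a0 a1 a2 a3 a4 a5 a6 a7 a8 a9 a10 a11 a12 a13 a14 a15 a16 a17 a18 a19 a20 a21 a22 a23 : α) : (![a0,a1,a2,a3,a4,a5,a6,a7,a8,a9,a10,a11,a12,a13,a14,a15,a16,a17,a18,a19,a20,a21,a22,a23] : Fin (6*4) → α) 15 = a15 := rfl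
@[simp] lemma vec24_mk_16 {α : Type*} (a0 a1 a2 a3 a4 a5 a6 a7 a8 a9 a10 a11 a12 a13 a14 a15 a16 a17 a18 a19 a20 a21 a22 a23 : α) (h : (16:ℕ) < 24) : (![a0,a1,a2,a3,a4,a5,a6,a7,a8,a9,a10,a11,a12,a13,a14,a15,a16,a17,a18,a19,a20,a21,a22,a23] : Fin (6*4) → α) ⟨16, h⟩ = a16 := rfl
@[simp] lemma vec24_on_16 {α : Type*} (a0 a1 a2 a3 a4 a5 a6 a7 a8 a9 a10 a11 a12 a13 a14 a15 a16 a17 a18 a19 a20 a21 a22 a23 : α) : (![a0,a1,a2,a3,a4,a5,a6,a7,a8,a9,a10,a11,a12,a13,a14,a15,a16,a17,a18,a19,a20,a21,a22,a23] : Fin (6*4) → α) 16 = a16 := rfl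
@[simp] lemma vec24_mk_17 {α : Type*} (a0 a1 a2 a3 a4 a5 a6 a7 a8 a9 a10 a11 a12 a13 a14 a15 a16 a17 a18 a19 a20 a21 a22 a23 : α) (h : (17:ℕ) < 24) : (![a0,a1,a2,a3,a4,a5,a6,a7,a8,a9,a10,a11,a12,a13,a14,a15,a16,a17,a18,a19,a20,a21,a22,a23] : Fin (6*4) → α) ⟨17, h⟩ = a17 := rfl
@[simp] lemma vec24_on_17 {α : Type*} (a0 a1 a2 a3 a4 a5 a6 a7 a8 a9 a10 a11 a12 a13 a14 a15 a16 a17 a18 a19 a20 a21 a22 a23 : α) : (![a0,a1,a2,a3,a4,a5,a6,a7,a8,a9,a10,a11,a12,a13,a14,a15,a16,a17,a18,a19,a20,a21,a22,a23] : Fin (6*4) → α) 17 = a17 := rfl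
@[simp] lemma vec24_mk_18 {α : Type*} (a0 a1 a2 a3 a4 a5 a6 a7 a8 a9 a10 a11 a12 a13 a14 a15 a16 a17 a18 a19 a20 a21 a22 a23 : α) (h : (18:ℕ) < 24) : (![a0,a1,a2,a3,a4,a5,a6,a7,a8,a9,a10,a11,a12,a13,a14,a15,a16,a17,a18,a19,a20,a21,a22,a23] : Fin (6*4) → α) ⟨18, h⟩ = a18 := rfl
@[simp] lemma vec24_on_18 {α : Type*} (a0 a1 a2 a3 a4 a5 a6 a7 a8 a9 a10 a11 a12 a13 a14 a15 a16 a17 a18 a19 a20 a21 a22 a23 : α) : (![a0,a1,a2,a3,a4,a5,a6,a7,a8,a9,a10,a11,a12,a13,a14,a15,a16,a17,a18,a19,a20,a21,a22,a23] : Fin (6*4) → α) 18 = a18 := rfl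
@[simp] lemma vec24_mk_19 {α : Type*} (a0 a1 a2 a3 a4 a5 a6 a7 a8 a9 a10 a11 a12 a13 a14 a15 a16 a17 a18 a19 a20 a21 a22 a23 : α) (h : (19:ℕ) < 24) : (![a0,a1,a2,a3,a4,a5,a6,a7,a8,a9,a10,a11,a12,a13,a14,a15,a16,a17,a18,a19,a20,a21,a22,a23] : Fin (6*4) → α) ⟨19, h⟩ = a19 := rfl
@[simp] lemma vec24_on_19 {α : Type*} (a0 a1 a2 a3 a4 a5 a6 a7 a8 a9 a10 a11 a12 a13 a14 a15 a16 a17 a18 a19 a20 a21 a22 a23 : α) : (![a0,a1,a2,a3,a4,a5,a6,a7,a8,a9,a10,a11,a12,a13,a14,a15,a16,a17,a18,a19,a20,a21,a22,a23] : Fin (6*4) → α) 19 = a19 := rfl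
@[simp] lemma vec24_mk_20 {α : Type*} (a0 a1 a2 a3 a4 a5 a6 a7 a8 a9 a10 a11 a12 a13 a14 a15 a16 a17 a18 a19 a20 a21 a22 a23 : α) (h : (20:ℕ) < 24) : (![a0,a1,a2,a3,a4,a5,a6,a7,a8,a9,a10,a11,a12,a13,a14,a15,a16,a17,a18,a19,a20,a21,a22,a23] : Fin (6*4) → α) ⟨20, h⟩ = a20 := rfl
@[simp] lemma vec24_on_20 {α : Type*} (a0 a1 a2 a3 a4 a5 a6 a7 a8 a9 a10 a11 a12 a13 a14 a15 a16 a17 a18 a19 a20 a21 a22 a23 : α) : (![a0,a1,a2,a3,a4,a5,a6,a7,a8,a9,a10,a11,a12,a13,a14,a15,a16,a17,a18,a19,a20,a21,a22,a23] : Fin (6*4) → α) 20 = a20 := rfl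
@[simp] lemma vec24_mk_21 {α : Type*} (a0 a1 a2 a3 a4 a5 a6 a7 a8 a9 a10 a11 a12 a13 a14 a15 a16 a17 a18 a19 a20 a21 a22 a23 : α) (h : (21:ℕ) < 24) : (![a0,a1,a2,a3,a4,a5,a6,a7,a8,a9,a10,a11,a12,a13,a14,a15,a16,a17,a18,a19,a20,a21,a22,a23] : Fin (6*4) → α) ⟨21, h⟩ = a21 := rfl
@[simp] lemma vec24_on_21 {α : Type*} (a0 a1 a2 a3 a4 a5 a6 a7 a8 a9 a10 a11 a12 a13 a14 a15 a16 a17 a18 a19 a20 a21 a22 a23 : α) : (![a0,a1,a2,a3,a4,a5,a6,a7,a8,a9,a10,a11,a12,a13,a14,a15,a16,a17,a18,a19,a20,a21,a22,a23] : Fin (6*4) → α) 21 = a21 := rfl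
@[simp] lemma vec24_mk_22 {α : Type*} (a0 a1 a2 a3 a4 a5 a6 a7 a8 a9 a10 a11 a12 a13 a14 a15 a16 a17 a18 a19 a20 a21 a22 a23 : α) (h : (22:ℕ) < 24) : (![a0,a1,a2,a3,a4,a5,a6,a7,a8,a9,a10,a11,a12,a13,a14,a15,a16,a17,a18,a19,a20,a21,a22,a23] : Fin (6*4) → α) ⟨22, h⟩ = a22 := rfl
@[simp] lemma vec24_on_22 {α : Type*} (a0 a1 a2 a3 a4 a5 a6 a7 a8 a9 a10 a11 a12 a13 a14 a15 a16 a17 a18 a19 a20 a21 a22 a23 : α) : (![a0,a1,a2,a3,a4,a5,a6,a7,a8,a9,a10,a11,a12,a13,a14,a15,a16,a17,a18,a19,a20,a21,a22,a23] : Fin (6*4) → α) 22 = a22 := rfl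
@[simp] lemma vec24_mk_23 {α : Type*} (a0 a1 a2 a3 a4 a5 a6 a7 a8 a9 a10 a11 a12 a13 a14 a15 a16 a17 a18 a19 a20 a21 a22 a23 : α) (h : (23:ℕ) < 24) : (![a0,a1,a2,a3,a4,a5,a6,a7,a8,a9,a10,a11,a12,a13,a14,a15,a16,a17,a18,a19,a20,a21,a22,a23] : Fin (6*4) → α) ⟨23, h⟩ = a23 := rfl
@[simp] lemma vec24_on_23 {α : Type*} (a0 a1 a2 a3 a4 a5 a6 a7 a8 a9 a10 a11 a12 a13 a14 a15 a16 a17 a18 a19 a20 a21 a22 a23 : α) : (![a0,a1,a2,a3,a4,a5,a6,a7,a8,a9,a10,a11,a12,a13,a14,a15,a16,a17,a18,a19,a20,a21,a22,a23] : Fin (6*4) → α) 23 = a23 := rfl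

@[simp] lemma vec7_mk_0 {α : Type*} (a0 a1 a2 a3 a4 a5 a6 : α) (h : (0:ℕ) < 7) : (![a0,a1,a2,a3,a4,a5,a6] : Fin (7) → α) ⟨0, h⟩ = a0 := rfl
@[simp] lemma vec7_on_0 {α : Type*} (a0 a1 a2 a3 a4 a5 a6 : α) : (![a0,a1,a2,a3,a4,a5,a6] : Fin (7) → α) 0 = a0 := rfl
@[simp] lemma vec7_mk_1 {α : Type*} (a0 a1 a2 a3 a4 a5 a6 : α) (h : (1:ℕ) < 7) : (![a0,a1,a2,a3,a4,a5,a6] : Fin (7) → α) ⟨1, h⟩ = a1 := rfl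
@[simp] lemma vec7_on_1 {α : Type*} (a0 a1 a2 a3 a4 a5 a6 : α) : (![a0,a1,a2,a3,a4,a5,a6] : Fin (7) → α) 1 = a1 := rfl
@[simp] lemma vec7_mk_2 {α : Type*} (a0 a1 a2 a3 a4 a5 a6 : α) (h : (2:ℕ) < 7) : (![a0,a1,a2,a3,a4,a5,a6] : Fin (7) → α) ⟨2, h⟩ = a2 := rfl
@[simp] lemma vec7_on_2 {α : Type*} (a0 a1 a2 a3 a4 a5 a6 : α) : (![a0,a1,a2,a3,a4,a5,a6] : Fin (7) → α) 2 = a2 := rfl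
@[simp] lemma vec7_mk_3 {α : Type*} (a0 a1 a2 a3 a4 a5 a6 : α) (h : (3:ℕ) < 7) : (![a0,a1,a2,a3,a4,a5,a6] : Fin (7) → α) ⟨3, h⟩ = a3 := rfl
@[simp] lemma vec7_on_3 {α : Type*} (a0 a1 a2 a3 a4 a5 a6 : α) : (![a0,a1,a2,a3,a4,a5,a6] : Fin (7) → α) 3 = a3 := rfl
@[simp] lemma vec7_mk_4 {α : Type*} (a0 a1 a2 a3 a4 a5 a6 : α) (h : (4:ℕ) < 7) : (![a0,a1,a2,a3,a4,a5,a6] : Fin (7) → α) ⟨4, h⟩ = a4 := rfl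
@[simp] lemma vec7_on_4 {α : Type*} (a0 a1 a2 a3 a4 a5 a6 : α) : (![a0,a1,a2,a3,a4,a5,a6] : Fin (7) → α) 4 = a4 := rfl
@[simp] lemma vec7_mk_5 {α : Type*} (a0 a1 a2 a3 a4 a5 a6 : α) (h : (5:ℕ) < 7) : (![a0,a1,a2,a3,a4,a5,a6] : Fin (7) → α) ⟨5, h⟩ = a5 := rfl
@[simp] lemma vec7_on_5 {α : Type*} (a0 a1 a2 a3 a4 a5 a6 : α) : (![a0,a1,a2,a3,a4,a5,a6] : Fin (7) → α) 5 = a5 := rfl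
@[simp] lemma vec7_mk_6 {α : Type*} (a0 a1 a2 a3 a4 a5 a6 : α) (h : (6:ℕ) < 7) : (![a0,a1,a2,a3,a4,a5,a6] : Fin (7) → α) ⟨6, h⟩ = a6 := rfl
@[simp] lemma vec7_on_6 {α : Type*} (a0 a1 a2 a3 a4 a5 a6 : α) : (![a0,a1,a2,a3,a4,a5,a6] : Fin (7) → α) 6 = a6 := rfl

@[simp] lemma vec3_mk_0 {α : Type*} (a0 a1 a2 : α) (h : (0:ℕ) < 3) : (![a0,a1,a2] : Fin (3) → α) ⟨0, h⟩ = a0 := rfl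
@[simp] lemma vec3_on_0 {α : Type*} (a0 a1 a2 : α) : (![a0,a1,a2] : Fin (3) → α) 0 = a0 := rfl
@[simp] lemma vec3_mk_1 {α : Type*} (a0 a1 a2 : α) (h : (1:ℕ) < 3) : (![a0,a1,a2] : Fin (3) → α) ⟨1, h⟩ = a1 := rfl
@[simp] lemma vec3_on_1 {α : Type*} (a0 a1 a2 : α) : (![a0,a1,a2] : Fin (3) → α) 1 = a1 := rfl
@[simp] lemma vec3_mk_2 {α : Type*} (a0 a1 a2 : α) (h : (2:ℕ) < 3) : (![a0,a1,a2] : Fin (3) → α) ⟨2, h⟩ = a2 := rfl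
@[simp] lemma vec3_on_2 {α : Type*} (a0 a1 a2 : α) : (![a0,a1,a2] : Fin (3) → α) 2 = a2 := rfl

lemma sum24 {M : Type*} [AddCommMonoid M] (f : Fin (6*4) → M) :
    ∑ r, f r = f 0 + (f 1 + (f 2 + (f 3 + (f 4 + (f 5 + (f 6 + (f 7 + (f 8 + (f 9 + (f 10 + (f 11 + (f 12 + (f 13 + (f 14 + (f 15 + (f 16 + (f 17 + (f 18 + (f 19 + (f 20 + (f 21 + (f 22 + (f 23))))))))))))))))))))))) := by
  simp only [Fin.sum_univ_succ, Fin.sum_univ_zero, add_zero]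
  rfl

lemma sum15 {M : Type*} [AddCommMonoid M] (f : Fin (3*4+3) → M) :
    ∑ r, f r = f 0 + (f 1 + (f 2 + (f 3 + (f 4 + (f 5 + (f 6 + (f 7 + (f 8 + (f 9 + (f 10 + (f 11 + (f 12 + (f 13 + (f 14)))))))))))))) := by
  simp only [Fin.sum_univ_succ, Fin.sum_univ_zero, add_zero]
  rfl

lemma prod15 {M : Type*} [CommMonoid M] (f : Fin (3*4+3) → M) :
    ∏ r, f r = f 0 * (f 1 * (f 2 * (f 3 * (f 4 * (f 5 * (f 6 * (f 7 * (f 8 * (f 9 * (f 10 * (f 11 * (f 12 * (f 13 * (f 14)))))))))))))) := by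
  simp only [Fin.prod_univ_succ, Fin.prod_univ_one, Fin.prod_univ_zero, mul_one]
  rfl
set_option maxHeartbeats 4000000
set_option linter.unreachableTactic false
set_option linter.unusedTactic false

lemma smulvec (v : Fin (6*4) → ℝ) : (Smat 4).mulVec v =
    ![- v 0 + v 1 + v 2 - v 6 + v 7 + v 8 - v 12 + v 13 + v 14 - v 18 + v 19 + v 20,
      - v 0 + v 1 + v 5,
      - v 3 + v 4 + v 5 - v 9 + v 10 + v 11 - v 15 + v 16 + v 17 - v 21 + v 22 + v 23,
       v 0 - v 1 - v 2,
       v 2 - v 3 + v 4 - v 6 + v 7 + v 11,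
       v 3 - v 4 - v 5,
       v 6 - v 7 - v 8,
       v 8 - v 9 + v 10 - v 12 + v 13 + v 17,
       v 9 - v 10 - v 11,
       v 12 - v 13 - v 14,
       v 14 - v 15 + v 16 - v 18 + v 19 + v 23,
       v 15 - v 16 - v 17,
       v 18 - v 19 - v 20,
       v 20 - v 21 + v 22,
       v 21 - v 22 - v 23] := by
  funext m
  rw [Matrix.mulVec, dotProduct, sum24]
  fin_cases m <;> norm_num [Smat, e] <;> ring

lemma phi_eq (x : Fin (3*4+3) → ℝ) : Phi 4 x =
    ![x 0 * x 1, x 3, x 3, x 2 * x 4, x 5, x 5, x 0 * x 4, x 6, x 6, x 2 * x 7, x 8, x 8, x 0 * x 7, x 9, x 9, x 2 * x 10, x 11, x 11, x 0 * x 10, x 12, x 12, x 2 * x 13, x 14, x 14] := by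
  funext r
  rw [Phi, prod15]
  fin_cases r <;> simp only [Ymat, Matrix.of_apply] <;> norm_num [eN] <;> ring

lemma zmulvec (x : Fin (3*4+3) → ℝ) : (Zmat 4).mulVec x =
    ![x 0 + x 3 + x 6 + x 9 + x 12, -x 0 - x 2 + x 1 + x 4 + x 7 + x 10 + x 13, x 2 + x 5 + x 8 + x 11 + x 14] := by
  funext m
  rw [Matrix.mulVec, dotProduct, sum15]
  fin_cases m <;> simp only [Zmat, Matrix.of_apply] <;> norm_num <;> ring

noncomputable def kap : Fin (6*4) → ℝ :=
  ![(9 : ℝ), (1 : ℝ), ((4 : ℝ)/5), ((540 : ℝ)/439), (1 : ℝ), (1 : ℝ), ((1215 : ℝ)/1756), (1 : ℝ), ((1 : ℝ)/8), ((540 : ℝ)/162701), (1 : ℝ), (1 : ℝ), ((2430 : ℝ)/162701), (1 : ℝ), (8 : ℝ), ((540 : ℝ)/439), (1 : ℝ), (1 : ℝ), ((1215 : ℝ)/878), (1 : ℝ), ((5 : ℝ)/4), (10 : ℝ), (1 : ℝ), (1 : ℝ)]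

noncomputable def b0 : Fin (3*4+3) → ℝ :=
  ![((233285 : ℝ)/11664), ((2 : ℝ)/485), ((46657 : ℝ)/11664), ((2405 : ℝ)/5832), ((1756 : ℝ)/13095), ((481 : ℝ)/1458), ((2405 : ℝ)/1458), ((162701 : ℝ)/5238), ((2405 : ℝ)/11664), ((12025 : ℝ)/11664), ((8780 : ℝ)/2619), ((12025 : ℝ)/1458), ((60125 : ℝ)/1458), ((250 : ℝ)/97), ((300625 : ℝ)/5832)]

noncomputable def b1 : Fin (3*4+3) → ℝ :=
  ![((10816 : ℝ)/567), ((1 : ℝ)/384), ((5408 : ℝ)/1701), ((845 : ℝ)/3402), ((439 : ℝ)/4320), ((338 : ℝ)/1701), ((676 : ℝ)/567), ((162701 : ℝ)/5760), ((169 : ℝ)/1134), ((169 : ℝ)/189), ((439 : ℝ)/120), ((1352 : ℝ)/189), ((2704 : ℝ)/63), ((27 : ℝ)/8), ((3380 : ℝ)/63)]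

noncomputable def b2 : Fin (3*4+3) → ℝ :=
  ![((194324 : ℝ)/10935), ((1 : ℝ)/808), ((48581 : ℝ)/21870), ((481 : ℝ)/4374), ((878 : ℝ)/13635), ((962 : ℝ)/10935), ((7696 : ℝ)/10935), ((325402 : ℝ)/13635), ((962 : ℝ)/10935), ((7696 : ℝ)/10935), ((56192 : ℝ)/13635), ((61568 : ℝ)/10935), ((492544 : ℝ)/10935), ((512 : ℝ)/101), ((123136 : ℝ)/2187)]

noncomputable def b3 : Fin (3*4+3) → ℝ :=
  ![((46657 : ℝ)/11664), ((250 : ℝ)/97), ((233285 : ℝ)/11664), ((300625 : ℝ)/5832), ((8780 : ℝ)/2619), ((60125 : ℝ)/1458), ((12025 : ℝ)/1458), ((162701 : ℝ)/5238), ((12025 : ℝ)/11664), ((2405 : ℝ)/11664), ((1756 : ℝ)/13095), ((2405 : ℝ)/1458), ((481 : ℝ)/1458), ((2 : ℝ)/485), ((2405 : ℝ)/5832)]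

noncomputable def b4 : Fin (3*4+3) → ℝ :=
  ![((5408 : ℝ)/1701), ((27 : ℝ)/8), ((10816 : ℝ)/567), ((3380 : ℝ)/63), ((439 : ℝ)/120), ((2704 : ℝ)/63), ((1352 : ℝ)/189), ((162701 : ℝ)/5760), ((169 : ℝ)/189), ((169 : ℝ)/1134), ((439 : ℝ)/4320), ((676 : ℝ)/567), ((338 : ℝ)/1701), ((1 : ℝ)/384), ((845 : ℝ)/3402)]

noncomputable def b5 : Fin (3*4+3) → ℝ :=
  ![((48581 : ℝ)/21870), ((512 : ℝ)/101), ((194324 : ℝ)/10935), ((123136 : ℝ)/2187), ((56192 : ℝ)/13635), ((492544 : ℝ)/10935), ((61568 : ℝ)/10935), ((325402 : ℝ)/13635), ((7696 : ℝ)/10935), ((962 : ℝ)/10935), ((878 : ℝ)/13635), ((7696 : ℝ)/10935), ((962 : ℝ)/10935), ((1 : ℝ)/808), ((481 : ℝ)/4374)]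

noncomputable def b6 : Fin (3*4+3) → ℝ :=
  ![((4810 : ℝ)/243), ((1 : ℝ)/6), ((4810 : ℝ)/243), ((12025 : ℝ)/729), ((439 : ℝ)/405), ((9620 : ℝ)/729), ((9620 : ℝ)/729), ((162701 : ℝ)/3240), ((2405 : ℝ)/1458), ((2405 : ℝ)/1458), ((439 : ℝ)/405), ((9620 : ℝ)/729), ((9620 : ℝ)/729), ((1 : ℝ)/6), ((12025 : ℝ)/729)]

lemma steady0 : isSteady 4 kap b0 := by
  unfold isSteady
  rw [smulvec]
  funext m
  fin_cases m <;> norm_num [phi_eq, b0, kap]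

lemma steady1 : isSteady 4 kap b1 := by
  unfold isSteady
  rw [smulvec]
  funext m
  fin_cases m <;> norm_num [phi_eq, b1, kap]

lemma steady2 : isSteady 4 kap b2 := by
  unfold isSteady
  rw [smulvec]
  funext m
  fin_cases m <;> norm_num [phi_eq, b2, kap]

lemma steady3 : isSteady 4 kap b3 := by
  unfold isSteady
  rw [smulvec]
  funext m
  fin_cases m <;> norm_num [phi_eq, b3, kap]

lemma steady4 : isSteady 4 kap b4 := by
  unfold isSteady
  rw [smulvec]
  funext m
  fin_cases m <;> norm_num [phi_eq, b4, kap]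

lemma steady5 : isSteady 4 kap b5 := by
  unfold isSteady
  rw [smulvec]
  funext m
  fin_cases m <;> norm_num [phi_eq, b5, kap]

lemma steady6 : isSteady 4 kap b6 := by
  unfold isSteady
  rw [smulvec]
  funext m
  fin_cases m <;> norm_num [phi_eq, b6, kap]

lemma coset0 : (Zmat 4).mulVec b0 = ![((31265 : ℝ)/486), ((25523 : ℝ)/1944), ((31265 : ℝ)/486)] := by
  rw [zmulvec]
  funext m
  fin_cases m <;> norm_num [b0]

lemma coset1 : (Zmat 4).mulVec b1 = ![((31265 : ℝ)/486), ((25523 : ℝ)/1944), ((31265 : ℝ)/486)] := by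
  rw [zmulvec]
  funext m
  fin_cases m <;> norm_num [b1]

lemma coset2 : (Zmat 4).mulVec b2 = ![((31265 : ℝ)/486), ((25523 : ℝ)/1944), ((31265 : ℝ)/486)] := by
  rw [zmulvec]
  funext m
  fin_cases m <;> norm_num [b2]

lemma coset3 : (Zmat 4).mulVec b3 = ![((31265 : ℝ)/486), ((25523 : ℝ)/1944), ((31265 : ℝ)/486)] := by
  rw [zmulvec]
  funext m
  fin_cases m <;> norm_num [b3]

lemma coset4 : (Zmat 4).mulVec b4 = ![((31265 : ℝ)/486), ((25523 : ℝ)/1944), ((31265 : ℝ)/486)] := by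
  rw [zmulvec]
  funext m
  fin_cases m <;> norm_num [b4]

lemma coset5 : (Zmat 4).mulVec b5 = ![((31265 : ℝ)/486), ((25523 : ℝ)/1944), ((31265 : ℝ)/486)] := by
  rw [zmulvec]
  funext m
  fin_cases m <;> norm_num [b5]

lemma coset6 : (Zmat 4).mulVec b6 = ![((31265 : ℝ)/486), ((25523 : ℝ)/1944), ((31265 : ℝ)/486)] := by
  rw [zmulvec]
  funext m
  fin_cases m <;> norm_num [b6]

/-- (Counterexample to the Wang–Sontag conjecture for `n = 4`.)
There exist rate constants `κ ∈ ℝ_{>0}^{24}` and seven pairwise distinct positive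
steady states of the 4-site system lying in one coset of the stoichiometric
subspace. -/
theorem four_site_seven_steady_states :
    ∃ (κ : Fin (6*4) → ℝ) (b : Fin 7 → Fin (3*4+3) → ℝ),
      (∀ r, 0 < κ r) ∧
      (∀ j i, 0 < b j i) ∧
      (∀ j j' : Fin 7, j ≠ j' → b j ≠ b j') ∧
      (∀ j, isSteady 4 κ (b j)) ∧
      (∀ j j' : Fin 7, (Zmat 4).mulVec (b j) = (Zmat 4).mulVec (b j')) := by
  refine ⟨kap, ![b0, b1, b2, b3, b4, b5, b6], ?_, ?_, ?_, ?_, ?_⟩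
  · intro r; fin_cases r <;> norm_num [kap]
  · intro j i
    fin_cases j <;> fin_cases i <;>
      norm_num [b0, b1, b2, b3, b4, b5, b6]
  · intro j j' hne heq
    have h := congrFun heq 0
    fin_cases j <;> fin_cases j' <;>
      first
        | exact absurd rfl hne
        | (norm_num [b0, b1, b2, b3, b4, b5, b6] at h)
  · intro j
    fin_cases j <;>
      simp only [vec7_mk_0, vec7_mk_1, vec7_mk_2, vec7_mk_3, vec7_mk_4, vec7_mk_5, vec7_mk_6,
        vec7_on_0, vec7_on_1, vec7_on_2, vec7_on_3, vec7_on_4, vec7_on_5, vec7_on_6]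
    exacts [steady0, steady1, steady2, steady3, steady4, steady5, steady6]
  · have hz : ∀ j : Fin 7, (Zmat 4).mulVec (![b0, b1, b2, b3, b4, b5, b6] j)
        = ![((31265 : ℝ)/486), ((25523 : ℝ)/1944), ((31265 : ℝ)/486)] := by
      intro j
      fin_cases j <;>
        simp only [vec7_mk_0, vec7_mk_1, vec7_mk_2, vec7_mk_3, vec7_mk_4, vec7_mk_5, vec7_mk_6,
          vec7_on_0, vec7_on_1, vec7_on_2, vec7_on_3, vec7_on_4, vec7_on_5, vec7_on_6] <;>
        first
          | exact coset0 | exact coset1 | exact coset2 | exact coset3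
          | exact coset4 | exact coset5 | exact coset6
    intro j j'
    rw [hz j, hz j']


end Phos
end
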